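/- arXiv:1208.3046 — 5 statements merged into one kernel-verified Lean document; each statement's English description precedes it below -/
import Mathlib

section
/- Let G be a finite abelian p-group and M a maximal subgroup of G (i.e., a subgroup of index p). Then there exist a subgroup H of G and a nonnegative integer i such that G is isomorphic to H × C_{p^{i+1}} via an isomorphism carrying M onto H × C_{p^i}, where C_{p^i} is the unique subgroup of index p in C_{p^{i+1}}. -/
open Multiplicative

lemma aux_zmultiples (p N : ℕ) (hpN : p ∣ N) [NeZero N] (b : ZMod N) :
    b ∈ AddSubgroup.zmultiples (p : ZMod N) ↔ ZMod.castHom hpN (ZMod p) b = 0 := by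
  constructor
  · rintro ⟨k, rfl⟩
    show ZMod.castHom hpN (ZMod p) (k • (p : ZMod N)) = 0
    rw [zsmul_eq_mul, map_mul, map_intCast, map_natCast, ZMod.natCast_self, mul_zero]
  · intro hb
    have h1 : (b.val : ZMod p) = 0 := by
      rwa [ZMod.castHom_apply, ← ZMod.natCast_val] at hb
    obtain ⟨m, hm⟩ := (ZMod.natCast_eq_zero_iff _ _).1 h1
    refine ⟨(m : ℤ), ?_⟩
    have h2 : ((b.val : ℕ) : ZMod N) = b := by rw [ZMod.natCast_val, ZMod.cast_id]
    show ((m:ℤ) • ((p:ZMod N)) = b)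
    rw [← h2, hm, zsmul_eq_mul]
    push_cast
    ring

lemma aux_mem_zpowers_ofAdd {N : ℕ} (c : ZMod N) (b : Multiplicative (ZMod N)) :
    b ∈ Subgroup.zpowers (ofAdd c) ↔ toAdd b ∈ AddSubgroup.zmultiples c := by
  constructor
  · rintro ⟨k, rfl⟩
    exact ⟨k, by simp⟩
  · rintro ⟨k, hk⟩
    refine ⟨k, ?_⟩
    have : toAdd (ofAdd c ^ k) = toAdd b := by simpa using hk
    exact toAdd.injective this

lemma aux_ofAdd_eq_pow {n : ℕ} [NeZero n] (a : ZMod n) :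
    ofAdd a = (ofAdd (1 : ZMod n)) ^ a.val := by
  rw [← ofAdd_nsmul]
  congr 1
  rw [nsmul_eq_mul, mul_one, ZMod.natCast_val, ZMod.cast_id]

/-- For a finite abelian p-group G and a maximal subgroup M of G, there are a subgroup
H ≤ G and i ≥ 0 with G ≅ H × C_{p^{i+1}} carrying M onto H × C_{p^i}, where C_{p^i}
is the unique index-p subgroup of C_{p^{i+1}} (the subgroup generated by p). -/
theorem stmt_4 (p : ℕ) (hp : p.Prime) (G : Type*) [CommGroup G] [Finite G]
    (hG : IsPGroup p G) (M : Subgroup G) (hM : IsCoatom M) :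
    ∃ (H : Subgroup G) (i : ℕ) (e : G ≃* (H × Multiplicative (ZMod (p ^ (i + 1))))),
      ∀ g : G, g ∈ M ↔
        (e g).2 ∈ Subgroup.zpowers (Multiplicative.ofAdd (p : ZMod (p ^ (i + 1)))) := by
  classical
  haveI : Fact p.Prime := ⟨hp⟩
  haveI := M.normal_of_comm
  -- step 1 : φ with kernel M
  obtain ⟨φ, hφ⟩ : ∃ φ : G →* Multiplicative (ZMod p), ∀ g, (g ∈ M ↔ φ g = 1) := by
    have hQp : IsPGroup p (G ⧸ M) := hG.to_quotient M
    obtain ⟨g₀, -, hg₀⟩ := SetLike.exists_of_lt hM.1.lt_top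
    set a : G ⧸ M := QuotientGroup.mk g₀ with ha_def
    have ha : a ≠ 1 := by
      simpa [ha_def, QuotientGroup.eq_one_iff] using hg₀
    obtain ⟨m, hma⟩ := IsPGroup.iff_orderOf.mp hQp a
    have hm0 : m ≠ 0 := by
      rintro rfl
      exact ha (orderOf_eq_one_iff.mp (by simp [hma]))
    set b := a ^ (p ^ (m - 1)) with hb_def
    have hb1 : b ≠ 1 := by
      intro hb
      have h1 : orderOf a ∣ p ^ (m - 1) := orderOf_dvd_of_pow_eq_one hb
      rw [hma] at h1
      have h2 := Nat.le_of_dvd (pow_pos hp.pos _) h1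
      exact absurd h2 (not_le.mpr (Nat.pow_lt_pow_right hp.one_lt (by omega)))
    have hbp : b ^ p = 1 := by
      rw [hb_def, ← pow_mul, ← pow_succ, Nat.sub_add_cancel (Nat.one_le_iff_ne_zero.mpr hm0),
        ← hma, pow_orderOf_eq_one]
    have hbord : orderOf b = p := orderOf_eq_prime hbp hb1
    have hbtop : Subgroup.zpowers b = ⊤ := by
      set N' : Subgroup G := Subgroup.comap (QuotientGroup.mk' M) (Subgroup.zpowers b) with hN'
      have hMN : M ≤ N' := by
        intro g hg
        have : QuotientGroup.mk' M g = 1 := (QuotientGroup.eq_one_iff g).mpr hg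
        simp only [hN', Subgroup.mem_comap, this]
        exact Subgroup.one_mem _
      obtain ⟨g₁, hg₁⟩ := QuotientGroup.mk'_surjective M b
      have hg₁N : g₁ ∈ N' := by
        simp [hN', Subgroup.mem_comap, hg₁, Subgroup.mem_zpowers]
      have hg₁M : g₁ ∉ M := fun h => hb1 (by rw [← hg₁]; exact (QuotientGroup.eq_one_iff g₁).mpr h)
      have : N' = ⊤ := hM.2 N' (lt_of_le_of_ne hMN (fun h => hg₁M (h ▸ hg₁N)))
      rw [eq_top_iff]
      rintro q -
      obtain ⟨g, rfl⟩ := QuotientGroup.mk'_surjective M q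
      have : g ∈ N' := this ▸ Subgroup.mem_top g
      simpa [hN', Subgroup.mem_comap] using this
    have hcard : Nat.card (G ⧸ M) = p := by
      rw [← Subgroup.card_top, ← hbtop, Nat.card_zpowers, hbord]
    have hcard' : Nat.card (Multiplicative (ZMod p)) = p := by
      rw [Nat.card_congr Multiplicative.toAdd, Nat.card_zmod]
    let eQ : (G ⧸ M) ≃* Multiplicative (ZMod p) := mulEquivOfPrimeCardEq hcard hcard'
    refine ⟨eQ.toMonoidHom.comp (QuotientGroup.mk' M), fun g => ?_⟩
    rw [MonoidHom.comp_apply]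
    constructor
    · intro hg
      have : QuotientGroup.mk' M g = 1 := (QuotientGroup.eq_one_iff g).mpr hg
      simp [this]
    · intro hg
      have : QuotientGroup.mk' M g = 1 := eQ.injective (by simpa using hg)
      exact (QuotientGroup.eq_one_iff g).mp this
  -- step 2 : minimal order element outside M
  obtain ⟨g₀, hg₀⟩ : ∃ g₀ : G, g₀ ∉ M := by
    obtain ⟨g₀, -, h⟩ := SetLike.exists_of_lt (hM.1.lt_top)
    exact ⟨g₀, h⟩
  obtain ⟨x, hxM, hxmin⟩ := Set.exists_min_image {g : G | g ∉ M} orderOf (Set.toFinite _) ⟨g₀, hg₀⟩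
  obtain ⟨m, hm⟩ := IsPGroup.iff_orderOf.mp hG x
  have hx1 : x ≠ 1 := fun h => hxM (h ▸ M.one_mem)
  obtain ⟨i, rfl⟩ : ∃ i, m = i + 1 := by
    refine ⟨m - 1, ?_⟩
    rcases Nat.eq_zero_or_pos m with h | h
    · exfalso; apply hx1
      have : orderOf x = 1 := by rw [hm, h, pow_zero]
      exact orderOf_eq_one_iff.mp this
    · omega
  set N := p ^ (i + 1) with hN
  haveI : NeZero N := ⟨pow_ne_zero _ hp.pos.ne'⟩
  have hpN : p ∣ N := dvd_pow_self p (Nat.succ_ne_zero i)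
  -- step 3 : structure theorem
  obtain ⟨ι, hι, n, hn, ⟨κ⟩⟩ := CommGroup.equiv_prod_multiplicative_zmod_of_finite G
  haveI : ∀ j, NeZero (n j) := fun j => ⟨by have := hn j; omega⟩
  obtain ⟨K, hK⟩ := hG.exists_card_eq
  have hnpow : ∀ j, ∃ e, n j = p ^ e := by
    intro j
    have h1 : n j ∣ Nat.card G := by
      rw [Nat.card_congr κ.toEquiv, Nat.card_pi]
      have : Nat.card (Multiplicative (ZMod (n j))) = n j := by
        rw [Nat.card_congr Multiplicative.toAdd, Nat.card_zmod]
      rw [← this]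
      exact Finset.dvd_prod_of_mem _ (Finset.mem_univ j)
    rw [hK] at h1
    obtain ⟨e, -, he⟩ := (Nat.dvd_prime_pow hp).mp h1
    exact ⟨e, he⟩
  -- generators and their φ-values
  set g_ : ι → G := fun j => κ.symm (Pi.mulSingle j (ofAdd (1 : ZMod (n j)))) with hg_
  set c : ι → ZMod p := fun j => toAdd (φ (g_ j)) with hc
  have hord : ∀ j, orderOf (g_ j) = n j := by
    intro j
    rw [hg_]
    simp only [← MulEquiv.coe_toMonoidHom]
    rw [orderOf_injective κ.symm.toMonoidHom κ.symm.injective, orderOf_piMulSingle,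
      orderOf_ofAdd_eq_addOrderOf, ZMod.addOrderOf_one]
  have hdvd : ∀ j, c j ≠ 0 → N ∣ n j := by
    intro j hcj
    have hgM : g_ j ∉ M := by
      intro h
      apply hcj
      rw [hc]
      simp only [(hφ _).mp h, toAdd_one]
    have h1 : orderOf x ≤ orderOf (g_ j) := hxmin _ hgM
    rw [hm, hord j] at h1
    obtain ⟨e, he⟩ := hnpow j
    rw [he] at h1 ⊢
    exact pow_dvd_pow p ((Nat.pow_le_pow_iff_right hp.one_lt).mp h1)
  -- step 4 : the lifted homomorphisms
  have fex : ∀ j, ∃ f : Multiplicative (ZMod (n j)) →* Multiplicative (ZMod N),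
      ∀ a : ZMod (n j),
        ZMod.castHom hpN (ZMod p) (toAdd (f (ofAdd a))) = (a.val : ZMod p) * c j := by
    intro j
    by_cases hcj : c j = 0
    · refine ⟨1, fun a => by simp [hcj]⟩
    · have hdj := hdvd j hcj
      refine ⟨MonoidHom.mk' (fun b => ofAdd (((c j).val : ZMod N) *
          ZMod.castHom hdj (ZMod N) (toAdd b))) ?_, ?_⟩
      · intro y z
        show ofAdd (((c j).val : ZMod N) * ZMod.castHom hdj (ZMod N) (toAdd (y * z))) = _
        rw [toAdd_mul, map_add, mul_add, ofAdd_add]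
      · intro a
        simp only [MonoidHom.mk'_apply, toAdd_ofAdd, map_mul, map_natCast]
        rw [ZMod.natCast_val, ZMod.cast_id]
        have h2 : (ZMod.castHom hpN (ZMod p)).comp (ZMod.castHom hdj (ZMod N)) =
            ZMod.castHom (hpN.trans hdj) (ZMod p) := ZMod.castHom_comp hpN hdj
        have h3 : ZMod.castHom hpN (ZMod p) (ZMod.castHom hdj (ZMod N) a) =
            ZMod.castHom (hpN.trans hdj) (ZMod p) a := by
          rw [← h2]; rfl
        rw [h3, ZMod.castHom_apply, ← ZMod.natCast_val, mul_comm]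
  choose f hf using fex
  -- step 5 : ρ
  set ρ : G →* Multiplicative (ZMod N) := MonoidHom.mk' (fun g => ∏ j, f j (κ g j)) (by
    intro y z
    show ∏ j, f j (κ (y * z) j) = (∏ j, f j (κ y j)) * ∏ j, f j (κ z j)
    rw [← Finset.prod_mul_distrib]
    refine Finset.prod_congr rfl fun j _ => ?_
    rw [map_mul, Pi.mul_apply, map_mul]) with hρ
  have hcompat : ∀ g : G, ofAdd (ZMod.castHom hpN (ZMod p) (toAdd (ρ g))) = φ g := by
    have key : ∀ v : ∀ j, Multiplicative (ZMod (n j)),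
        ofAdd (ZMod.castHom hpN (ZMod p) (toAdd (ρ (κ.symm v)))) = φ (κ.symm v) := by
      set A : (∀ j, Multiplicative (ZMod (n j))) →* Multiplicative (ZMod p) :=
        MonoidHom.mk' (fun v => ofAdd (ZMod.castHom hpN (ZMod p) (toAdd (ρ (κ.symm v))))) (by
          intro y z
          show ofAdd (ZMod.castHom hpN (ZMod p) (toAdd (ρ (κ.symm (y * z))))) = _
          rw [map_mul κ.symm, map_mul ρ, toAdd_mul, map_add, ofAdd_add]) with hA
      set B : (∀ j, Multiplicative (ZMod (n j))) →* Multiplicative (ZMod p) :=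
        φ.comp κ.symm.toMonoidHom with hB
      have hAB : A = B := by
        apply MonoidHom.functions_ext
        intro j z
        suffices h : ∀ a : ZMod (n j),
            A (Pi.mulSingle j (ofAdd a)) = B (Pi.mulSingle j (ofAdd a)) by
          have := h (toAdd z); rwa [ofAdd_toAdd] at this
        intro a
        show ofAdd (ZMod.castHom hpN (ZMod p) (toAdd (ρ (κ.symm (Pi.mulSingle j (ofAdd a)))))) =
          φ (κ.symm (Pi.mulSingle j (ofAdd a)))
        have hL : ρ (κ.symm (Pi.mulSingle j (ofAdd a))) = f j (ofAdd a) := by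
          have h0 : ρ (κ.symm (Pi.mulSingle j (ofAdd a))) =
              ∏ k, f k ((Pi.mulSingle j (ofAdd a) : ∀ k, Multiplicative (ZMod (n k))) k) := by
            show ∏ k, f k (κ (κ.symm (Pi.mulSingle j (ofAdd a))) k) =
              ∏ k, f k ((Pi.mulSingle j (ofAdd a) : ∀ k, Multiplicative (ZMod (n k))) k)
            rw [MulEquiv.apply_symm_apply]
          rw [h0, Fintype.prod_eq_single j fun k hk => by
            rw [Pi.mulSingle_eq_of_ne hk, map_one], Pi.mulSingle_eq_same]
        have hone : φ (κ.symm (Pi.mulSingle j (ofAdd (1 : ZMod (n j))))) = ofAdd (c j) :=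
          (ofAdd_toAdd _).symm
        have hR : φ (κ.symm (Pi.mulSingle j (ofAdd a))) = ofAdd ((a.val : ZMod p) * c j) := by
          rw [aux_ofAdd_eq_pow a, Pi.mulSingle_pow, map_pow, map_pow, hone,
            ← ofAdd_nsmul, nsmul_eq_mul]
        rw [hL, hf j a, hR]
      intro v
      calc ofAdd (ZMod.castHom hpN (ZMod p) (toAdd (ρ (κ.symm v)))) = A v := rfl
      _ = B v := by rw [hAB]
      _ = φ (κ.symm v) := rfl
    intro g
    have h := key (κ g)
    rwa [MulEquiv.symm_apply_apply] at h
  -- step 6 : ρ x is a unit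
  have hkerφ : ∀ g : G, (φ g = 1 ↔ ZMod.castHom hpN (ZMod p) (toAdd (ρ g)) = 0) := by
    intro g
    rw [← hcompat g]
    constructor
    · intro h
      have h2 := congrArg toAdd h
      simpa using h2
    · intro h
      rw [h]
      rfl
  have hx_unit : IsUnit (toAdd (ρ x)) := by
    have h1 : ZMod.castHom hpN (ZMod p) (toAdd (ρ x)) ≠ 0 := by
      intro h
      exact hxM ((hφ x).mpr ((hkerφ x).mpr h))
    have h2 : ((toAdd (ρ x)).val : ZMod p) ≠ 0 := by
      rwa [ZMod.castHom_apply, ← ZMod.natCast_val] at h1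
    have h3 : ¬ p ∣ (toAdd (ρ x)).val := fun hd =>
      h2 ((ZMod.natCast_eq_zero_iff _ _).mpr hd)
    have h4 : Nat.Coprime (toAdd (ρ x)).val N :=
      Nat.Coprime.pow_right _ ((Nat.Prime.coprime_iff_not_dvd hp).mpr h3).symm
    have h5 : IsUnit (((toAdd (ρ x)).val : ℕ) : ZMod N) := (ZMod.isUnit_iff_coprime _ _).mpr h4
    rwa [ZMod.natCast_val, ZMod.cast_id] at h5
  obtain ⟨v, hv⟩ := hx_unit
  set w : ZMod N := ((v⁻¹ : (ZMod N)ˣ) : ZMod N) with hw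
  have hvw : toAdd (ρ x) * w = 1 := by
    rw [← hv, hw]
    exact_mod_cast v.mul_inv
  -- step 7 : the section σ
  have hxN : (zmultiplesHom (Additive G)) (Additive.ofMul x) (N : ℤ) = 0 := by
    rw [zmultiplesHom_apply, ← ofMul_zpow, zpow_natCast, ← hm, pow_orderOf_eq_one]
    rfl
  set σ₁ : ZMod N →+ Additive G := ZMod.lift N ⟨(zmultiplesHom (Additive G)) (Additive.ofMul x), hxN⟩
    with hσ₁
  have hσ₁val : ∀ d : ZMod N, Additive.toMul (σ₁ d) = x ^ d.val := by
    intro d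
    have h1 : ((d.val : ℤ) : ZMod N) = d := by push_cast [ZMod.natCast_val, ZMod.cast_id]; rfl
    conv_lhs => rw [← h1]
    rw [hσ₁, ZMod.lift_coe, zmultiplesHom_apply, ← ofMul_zpow, toMul_ofMul,
      zpow_natCast]
  set σ : Multiplicative (ZMod N) →* G :=
    MonoidHom.mk' (fun b => Additive.toMul (σ₁ (w * toAdd b))) (by
      intro y z
      show Additive.toMul (σ₁ (w * toAdd (y * z))) = _
      rw [toAdd_mul, mul_add, map_add]
      rfl) with hσdef
  have hρpow : ∀ k : ℕ, toAdd (ρ (x ^ k)) = (k : ZMod N) * toAdd (ρ x) := by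
    intro k
    rw [map_pow, toAdd_pow, nsmul_eq_mul]
  have hρσ : ∀ b, ρ (σ b) = b := by
    intro b
    have h1 : σ b = x ^ (w * toAdd b).val := hσ₁val _
    apply toAdd.injective
    rw [h1, hρpow, ZMod.natCast_val, ZMod.cast_id]
    calc w * toAdd b * toAdd (ρ x) = toAdd b * (toAdd (ρ x) * w) := by ring
    _ = toAdd b := by rw [hvw, mul_one]
  -- step 8 : the equivalence
  have hmem : ∀ g : G, g * (σ (ρ g))⁻¹ ∈ ρ.ker := by
    intro g
    rw [MonoidHom.mem_ker, map_mul, map_inv, hρσ]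
    simp
  let e : G ≃* (↥ρ.ker × Multiplicative (ZMod N)) :=
    { toFun := fun g => (⟨g * (σ (ρ g))⁻¹, hmem g⟩, ρ g)
      invFun := fun q => (q.1 : G) * σ q.2
      left_inv := fun g => by
        show g * (σ (ρ g))⁻¹ * σ (ρ g) = g
        rw [inv_mul_cancel_right]
      right_inv := fun q => by
        obtain ⟨⟨h, hh⟩, b⟩ := q
        have hρh : ρ h = 1 := MonoidHom.mem_ker.mp hh
        have h1 : ρ (h * σ b) = b := by rw [map_mul, hρh, one_mul, hρσ]
        refine Prod.ext ?_ ?_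
        · apply Subtype.ext
          show h * σ b * (σ (ρ (h * σ b)))⁻¹ = h
          rw [h1, mul_inv_cancel_right]
        · exact h1
      map_mul' := fun g₁ g₂ => by
        refine Prod.ext ?_ ?_
        · apply Subtype.ext
          show g₁ * g₂ * (σ (ρ (g₁ * g₂)))⁻¹ = (g₁ * (σ (ρ g₁))⁻¹) * (g₂ * (σ (ρ g₂))⁻¹)
          rw [map_mul, map_mul, mul_inv]
          exact mul_mul_mul_comm g₁ g₂ (σ (ρ g₁))⁻¹ (σ (ρ g₂))⁻¹
        · exact map_mul ρ g₁ g₂ }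
  refine ⟨ρ.ker, i, e, fun g => ?_⟩
  show g ∈ M ↔ ρ g ∈ Subgroup.zpowers (ofAdd (p : ZMod N))
  rw [hφ g, hkerφ g, aux_mem_zpowers_ofAdd, aux_zmultiples p N hpN]
end

section
/- Let A, B, C, D be finite abelian p-groups such that A is isomorphic to a proper subgroup of B and C is isomorphic to a proper subgroup of D. Then |Hom(A, C)| < |Hom(B, D)|. -/
open Finset

namespace Stmt5Aux

/-- The number of solutions of `p ^ k • x = 0` in `ZMod (p ^ a)` is `p ^ min k a`. -/
lemma card_nsmul_ker {p : ℕ} (hp : p.Prime) (a k : ℕ) :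
    Nat.card {x : ZMod (p ^ a) // p ^ k • x = 0} = p ^ min k a := by
  haveI : NeZero (p ^ a) := ⟨pow_ne_zero _ hp.ne_zero⟩
  set c : ZMod (p ^ a) := ((p ^ k : ℕ) : ZMod (p ^ a)) with hc
  set f : ZMod (p ^ a) →+ ZMod (p ^ a) := AddMonoidHom.mulLeft c with hf
  have h1 : Nat.card {x : ZMod (p ^ a) // p ^ k • x = 0} = Nat.card f.ker := by
    refine Nat.card_congr (Equiv.subtypeEquivRight fun x => ?_)
    simp [hf, AddMonoidHom.mem_ker, AddMonoidHom.mulLeft, nsmul_eq_mul, hc]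
  have h2 : f.range = AddSubgroup.zmultiples c := by
    ext y
    simp only [AddMonoidHom.mem_range, AddSubgroup.mem_zmultiples_iff]
    constructor
    · rintro ⟨x, rfl⟩
      refine ⟨(x.val : ℤ), ?_⟩
      rw [zsmul_eq_mul, Int.cast_natCast, ZMod.natCast_val, ZMod.cast_id, mul_comm]
      rfl
    · rintro ⟨z, rfl⟩
      exact ⟨(z : ZMod (p ^ a)), by rw [zsmul_eq_mul, mul_comm]; rfl⟩
  have h3 : Nat.card (ZMod (p ^ a)) = Nat.card (ZMod (p ^ a) ⧸ f.ker) * Nat.card f.ker :=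
    AddSubgroup.card_eq_card_quotient_mul_card_addSubgroup f.ker
  have h4 : Nat.card (ZMod (p ^ a) ⧸ f.ker) = Nat.card f.range :=
    Nat.card_congr (QuotientAddGroup.quotientKerEquivRange f).toEquiv
  have hgcd : Nat.gcd (p ^ a) (p ^ k) = p ^ min a k := by
    rcases le_total a k with h | h
    · rw [min_eq_left h, Nat.gcd_eq_left (pow_dvd_pow p h)]
    · rw [min_eq_right h, Nat.gcd_eq_right (pow_dvd_pow p h)]
  have h5 : Nat.card f.range = p ^ (a - min a k) := by
    rw [h2, Nat.card_zmultiples, hc, ZMod.addOrderOf_coe _ (pow_ne_zero _ hp.ne_zero), hgcd,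
      Nat.pow_div (min_le_left a k) hp.pos]
  rw [Nat.card_zmod, h4, h5] at h3
  have heq : p ^ (a - min a k) * p ^ min a k = p ^ (a - min a k) * Nat.card f.ker := by
    rw [← pow_add, Nat.sub_add_cancel (min_le_left a k), ← h3]
  have := Nat.eq_of_mul_eq_mul_left (pow_pos hp.pos _) heq
  rw [h1, ← this, min_comm]

lemma pow_smul_eq_zero_of_le {p : ℕ} {a : ℕ} {y : ZMod (p ^ a)} {m i : ℕ}
    (h : p ^ m • y = 0) (hmi : m ≤ i) : p ^ i • y = 0 := by
  have : p ^ i • y = p ^ (i - m) • (p ^ m • y) := by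
    rw [← mul_nsmul, ← pow_add, Nat.add_sub_cancel' hmi]
  rw [this, h, smul_zero]

lemma exists_pow_smul_iff {p : ℕ} (hp : p.Prime) (a k : ℕ) (y : ZMod (p ^ a)) :
    (∃ x : ZMod (p ^ a), p ^ k • x = y) ↔ p ^ (a - k) • y = 0 := by
  haveI : NeZero (p ^ a) := ⟨pow_ne_zero _ hp.ne_zero⟩
  constructor
  · rintro ⟨x, rfl⟩
    rw [← mul_nsmul, ← pow_add]
    have h0 : ((p ^ (k + (a - k)) : ℕ) : ZMod (p ^ a)) = 0 := by
      rw [ZMod.natCast_eq_zero_iff]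
      exact pow_dvd_pow p (by omega)
    rw [nsmul_eq_mul, h0, zero_mul]
  · intro h
    by_cases hk : k ≤ a
    · have hy : ((p ^ (a - k) * y.val : ℕ) : ZMod (p ^ a)) = 0 := by
        push_cast
        rw [ZMod.natCast_val, ZMod.cast_id, ← Nat.cast_pow, ← nsmul_eq_mul]
        exact h
      rw [ZMod.natCast_eq_zero_iff] at hy
      have hd : p ^ k ∣ y.val := by
        have h2 : p ^ (a - k) * p ^ k ∣ p ^ (a - k) * y.val := by
          rwa [← pow_add, Nat.sub_add_cancel hk]
        exact (mul_dvd_mul_iff_left (a := p ^ (a - k)) (pow_ne_zero _ hp.ne_zero)).mp h2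
      refine ⟨((y.val / p ^ k : ℕ) : ZMod (p ^ a)), ?_⟩
      rw [nsmul_eq_mul, ← Nat.cast_mul, Nat.mul_div_cancel' hd, ZMod.natCast_val, ZMod.cast_id]
    · have ha : a - k = 0 := Nat.sub_eq_zero_of_le (le_of_not_ge hk)
      rw [ha, pow_zero, one_smul] at h
      exact ⟨0, by rw [smul_zero, h]⟩

lemma intr_cyclic {p : ℕ} (hp : p.Prime) (a k : ℕ) :
    Nat.card {y : ZMod (p ^ a) // (∃ x, p ^ k • x = y) ∧ p • y = 0}
      = if k < a then p else 1 := by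
  have key : ∀ y : ZMod (p ^ a),
      ((∃ x, p ^ k • x = y) ∧ p • y = 0) ↔ p ^ min (a - k) 1 • y = 0 := by
    intro y
    rw [exists_pow_smul_iff hp]
    constructor
    · rintro ⟨h1, h2⟩
      rcases min_cases (a - k) 1 with ⟨hm, _⟩ | ⟨hm, _⟩
      · rw [hm]; exact h1
      · rw [hm, pow_one]; simpa using h2
    · intro h
      refine ⟨pow_smul_eq_zero_of_le h (min_le_left _ _), ?_⟩
      have := pow_smul_eq_zero_of_le h (min_le_right _ _)
      simpa using this
  rw [Nat.card_congr (Equiv.subtypeEquivRight key), card_nsmul_ker hp]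
  rcases lt_or_ge k a with h | h
  · have h3 : min (min (a - k) 1) a = 1 := by omega
    rw [h3, if_pos h, pow_one]
  · have h2 : min (min (a - k) 1) a = 0 := by omega
    rw [h2, if_neg (by omega), pow_zero]

/-- Hom from `ZMod n` corresponds to `n`-torsion elements. -/
noncomputable def zmodHomEquiv (n : ℕ) (M : Type*) [AddCommGroup M] :
    (ZMod n →+ M) ≃ {x : M // n • x = 0} :=
  (ZMod.lift n).symm.trans <| Equiv.subtypeEquiv (zmultiplesHom M).symm <| by
    intro f
    have h1 : (zmultiplesHom M).symm f = f 1 := rfl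
    have h2 : f (n : ℤ) = n • f 1 := by
      rw [show ((n : ℤ)) = (n : ℤ) • (1 : ℤ) by simp, map_zsmul, natCast_zsmul]
    rw [h1, h2]

/-- Hom from `Multiplicative (ZMod n)` corresponds to `n`-torsion elements. -/
noncomputable def multZModHomEquiv (n : ℕ) (C : Type*) [CommGroup C] :
    (Multiplicative (ZMod n) →* C) ≃ {x : C // x ^ n = 1} :=
  MonoidHom.toAdditiveRight.trans <| (zmodHomEquiv n (Additive C)).trans <|
    Equiv.subtypeEquiv Additive.toMul fun x => by
      rw [show (Additive.toMul x ^ n = 1) ↔ (Additive.toMul (n • x) = Additive.toMul 0) by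
        rw [toMul_nsmul]; rfl]
      exact (Additive.toMul.injective.eq_iff (a := n • x) (b := 0)).symm

lemma card_hom_pi {ι : Type} [Fintype ι] (n : ι → ℕ) (C : Type*) [CommGroup C] :
    Nat.card ((∀ i, Multiplicative (ZMod (n i))) →* C)
      = ∏ i, Nat.card {x : C // x ^ (n i) = 1} := by
  classical
  rw [Nat.card_congr (Pi.monoidHomMulEquiv (fun i => Multiplicative (ZMod (n i))) C).toEquiv,
    Nat.card_pi]
  exact Finset.prod_congr rfl fun i _ => Nat.card_congr (multZModHomEquiv (n i) C)

lemma card_tors_pi {κ : Type} [Fintype κ] (m : κ → ℕ) (n : ℕ) :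
    Nat.card {x : (∀ j, Multiplicative (ZMod (m j))) // x ^ n = 1}
      = ∏ j, Nat.card {x : ZMod (m j) // n • x = 0} := by
  have key : ∀ x : (∀ j, Multiplicative (ZMod (m j))),
      (x ^ n = 1) ↔ ∀ j, n • (x j).toAdd = 0 := by
    intro x
    rw [funext_iff]
    exact forall_congr' fun j => Iff.rfl
  rw [Nat.card_congr ((Equiv.subtypeEquivRight key).trans
    (Equiv.subtypePiEquivPi (p := fun j (b : Multiplicative (ZMod (m j))) => n • b.toAdd = 0))),
    Nat.card_pi]
  exact Finset.prod_congr rfl fun j _ =>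
    Nat.card_congr (Equiv.subtypeEquiv Multiplicative.toAdd fun y => Iff.rfl).symm

/-- Intrinsic invariant: the number of `p`-torsion elements in the image of the
`p ^ k`-th power map. -/
noncomputable def intr (p : ℕ) (G : Type*) [CommGroup G] (k : ℕ) : ℕ :=
  Nat.card {y : G // (∃ x : G, x ^ p ^ k = y) ∧ y ^ p = 1}

lemma intr_pi {p : ℕ} (hp : p.Prime) {ι : Type} [Fintype ι] (a : ι → ℕ) (k : ℕ) :
    intr p (∀ i, Multiplicative (ZMod (p ^ a i))) k
      = p ^ (univ.filter fun i => k < a i).card := by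
  classical
  have key : ∀ y : (∀ i, Multiplicative (ZMod (p ^ a i))),
      ((∃ x, x ^ p ^ k = y) ∧ y ^ p = 1)
        ↔ ∀ i, (∃ x : ZMod (p ^ a i), p ^ k • x = (y i).toAdd) ∧ p • (y i).toAdd = 0 := by
    intro y
    rw [show ((∃ x, x ^ p ^ k = y) ∧ y ^ p = 1) ↔
        ((∀ i, ∃ x : ZMod (p ^ a i), p ^ k • x = (y i).toAdd) ∧
          (∀ i, p • (y i).toAdd = 0)) from ?_, ← forall_and]
    constructor
    · rintro ⟨⟨x, rfl⟩, h1⟩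
      exact ⟨fun i => ⟨(x i).toAdd, rfl⟩, fun i => congrFun h1 i⟩
    · rintro ⟨h1, h2⟩
      refine ⟨?_, funext h2⟩
      choose x hx using h1
      exact ⟨fun i => Multiplicative.ofAdd (x i), funext hx⟩
  rw [intr, Nat.card_congr ((Equiv.subtypeEquivRight key).trans
    (Equiv.subtypePiEquivPi (p := fun i (b : Multiplicative (ZMod (p ^ a i))) =>
      (∃ x : ZMod (p ^ a i), p ^ k • x = b.toAdd) ∧ p • b.toAdd = 0))),
    Nat.card_pi]
  have heach : ∀ i : ι, Nat.card {b : Multiplicative (ZMod (p ^ a i)) //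
      (∃ x : ZMod (p ^ a i), p ^ k • x = b.toAdd) ∧ p • b.toAdd = 0}
      = if k < a i then p else 1 := by
    intro i
    rw [← intr_cyclic hp (a i) k]
    exact Nat.card_congr (Equiv.subtypeEquiv Multiplicative.toAdd fun y => Iff.rfl)
  rw [Finset.prod_congr rfl fun i _ => heach i,
    ← Finset.prod_filter_mul_prod_filter_not univ (fun i => k < a i)]
  rw [Finset.prod_congr rfl (fun i hi => if_pos (Finset.mem_filter.mp hi).2),
    Finset.prod_congr rfl (fun i hi => if_neg (Finset.mem_filter.mp hi).2),
    Finset.prod_const, Finset.prod_const, one_pow, mul_one]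

lemma intr_congr {p k : ℕ} {G H : Type*} [CommGroup G] [CommGroup H] (e : G ≃* H) :
    intr p G k = intr p H k := by
  refine Nat.card_congr (Equiv.subtypeEquiv e.toEquiv fun y => ?_)
  show ((∃ x : G, x ^ p ^ k = y) ∧ y ^ p = 1) ↔ ((∃ x : H, x ^ p ^ k = e y) ∧ (e y) ^ p = 1)
  constructor
  · rintro ⟨⟨x, rfl⟩, h2⟩
    exact ⟨⟨e x, by rw [← map_pow]⟩, by rw [← map_pow, h2, map_one]⟩
  · rintro ⟨⟨x, hx⟩, h2⟩
    refine ⟨⟨e.symm x, e.injective ?_⟩, ?_⟩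
    · rw [map_pow, e.apply_symm_apply, hx]
    · apply e.injective
      rw [map_pow, h2, map_one]

lemma intr_le {p k : ℕ} {B : Type*} [CommGroup B] [Finite B] (B' : Subgroup B) :
    intr p B' k ≤ intr p B k := by
  refine Nat.card_le_card_of_injective
    (fun y => ⟨(y.1 : B), ?_, ?_⟩) ?_
  · obtain ⟨⟨x, hx⟩, _⟩ := y.2
    exact ⟨(x : B), by rw [← Subgroup.coe_pow, hx]⟩
  · obtain ⟨_, h2⟩ := y.2
    rw [← Subgroup.coe_pow, h2, Subgroup.coe_one]
  · intro y z h
    simp only [Subtype.mk.injEq, SetLike.coe_eq_coe, Subtype.val_inj] at h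
    exact h

lemma sum_ite_lt (m N : ℕ) (h : m ≤ N) :
    ∑ k ∈ range N, (if k < m then 1 else 0) = m := by
  induction N with
  | zero => simp at h; simp [h]
  | succ N ih =>
    rw [Finset.sum_range_succ]
    rcases Nat.lt_or_ge N m with h2 | h2
    · have hm : m = N + 1 := by omega
      subst hm
      rw [if_pos h2]
      have : ∑ k ∈ range N, (if k < N + 1 then 1 else 0) = ∑ k ∈ range N, 1 := by
        refine Finset.sum_congr rfl fun k hk => if_pos (by simp at hk; omega)
      rw [this, Finset.sum_const, Finset.card_range]; simp
    · rw [if_neg (by omega), ih (by omega), add_zero]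

lemma sum_min_eq {ι κ : Type} [Fintype ι] [Fintype κ] (a : ι → ℕ) (c : κ → ℕ) (N : ℕ)
    (ha : ∀ i, a i ≤ N) (hc : ∀ j, c j ≤ N) :
    ∑ i, ∑ j, min (a i) (c j)
      = ∑ k ∈ range N, (univ.filter fun i => k < a i).card *
          (univ.filter fun j => k < c j).card := by
  classical
  have key : ∀ (x y : ℕ), x ≤ N → y ≤ N →
      min x y = ∑ k ∈ range N, (if k < x then 1 else 0) * (if k < y then 1 else 0) := by
    intro x y hx hy
    have : ∀ k, (if k < x then 1 else 0) * (if k < y then 1 else 0)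
        = (if k < min x y then (1:ℕ) else 0) := by
      intro k
      by_cases h1 : k < x <;> by_cases h2 : k < y <;>
        simp [h1, h2, Nat.lt_min]
    rw [Finset.sum_congr rfl fun k _ => this k, sum_ite_lt _ _ (le_trans (min_le_left x y) hx)]
  calc ∑ i, ∑ j, min (a i) (c j)
      = ∑ i, ∑ j, ∑ k ∈ range N, (if k < a i then 1 else 0) * (if k < c j then 1 else 0) :=
        Finset.sum_congr rfl fun i _ => Finset.sum_congr rfl fun j _ => key _ _ (ha i) (hc j)
    _ = ∑ k ∈ range N, ∑ i, ∑ j, (if k < a i then (1:ℕ) else 0) * (if k < c j then 1 else 0) := by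
        rw [show (∑ i, ∑ j, ∑ k ∈ range N, (if k < a i then (1:ℕ) else 0) * (if k < c j then 1 else 0))
            = ∑ i, ∑ k ∈ range N, ∑ j, (if k < a i then (1:ℕ) else 0) * (if k < c j then 1 else 0) from
          Finset.sum_congr rfl fun i _ => Finset.sum_comm]
        exact Finset.sum_comm
    _ = ∑ k ∈ range N, (∑ i, (if k < a i then (1:ℕ) else 0)) * (∑ j, (if k < c j then 1 else 0)) :=
        Finset.sum_congr rfl fun k _ => (Finset.sum_mul_sum _ _ _ _).symm
    _ = _ := by
        refine Finset.sum_congr rfl fun k _ => ?_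
        rw [Finset.sum_boole, Finset.sum_boole]; simp

lemma sum_card_filter {ι : Type} [Fintype ι] (a : ι → ℕ) (N : ℕ) (ha : ∀ i, a i ≤ N) :
    ∑ i, a i = ∑ k ∈ range N, (univ.filter fun i => k < a i).card := by
  classical
  calc ∑ i, a i = ∑ i, ∑ k ∈ range N, (if k < a i then 1 else 0) :=
        Finset.sum_congr rfl fun i _ => (sum_ite_lt _ _ (ha i)).symm
    _ = ∑ k ∈ range N, ∑ i, (if k < a i then (1:ℕ) else 0) := Finset.sum_comm
    _ = _ := Finset.sum_congr rfl fun k _ => by rw [Finset.sum_boole]; simp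

lemma numeric {α β γ δ : ℕ → ℕ} {N : ℕ}
    (hab : ∀ k, α k ≤ β k) (hcd : ∀ k, γ k ≤ δ k)
    (hβ : ∀ k l, k ≤ l → β l ≤ β k) (hδ : ∀ k l, k ≤ l → δ l ≤ δ k)
    (h1 : ∑ k ∈ range N, α k < ∑ k ∈ range N, β k)
    (h2 : ∑ k ∈ range N, γ k < ∑ k ∈ range N, δ k) :
    ∑ k ∈ range N, α k * γ k < ∑ k ∈ range N, β k * δ k := by
  have e1 : ∃ k ∈ range N, α k < β k := by
    by_contra h
    push_neg at h
    exact absurd (Finset.sum_le_sum fun k hk => h k hk) (not_le.mpr h1)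
  have e2 : ∃ k ∈ range N, γ k < δ k := by
    by_contra h
    push_neg at h
    exact absurd (Finset.sum_le_sum fun k hk => h k hk) (not_le.mpr h2)
  obtain ⟨k0, hk0N, hk0⟩ := e1
  obtain ⟨l0, hl0N, hl0⟩ := e2
  refine Finset.sum_lt_sum (fun k _ => Nat.mul_le_mul (hab k) (hcd k)) ?_
  refine ⟨min k0 l0, ?_, ?_⟩
  · simp only [Finset.mem_range] at *; omega
  · rcases le_total k0 l0 with h | h
    · rw [min_eq_left h]
      have hδpos : 0 < δ k0 := lt_of_lt_of_le (Nat.lt_of_le_of_lt (Nat.zero_le _) hl0) (hδ _ _ h)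
      calc α k0 * γ k0 ≤ α k0 * δ k0 := Nat.mul_le_mul_left _ (hcd k0)
        _ < β k0 * δ k0 := (Nat.mul_lt_mul_right hδpos).mpr hk0
    · rw [min_eq_right h]
      have hβpos : 0 < β l0 := lt_of_lt_of_le (Nat.lt_of_le_of_lt (Nat.zero_le _) hk0) (hβ _ _ h)
      calc α l0 * γ l0 ≤ β l0 * γ l0 := Nat.mul_le_mul_right _ (hab l0)
        _ < β l0 * δ l0 := (Nat.mul_lt_mul_left hβpos).mpr hl0

lemma decomp (p : ℕ) (hp : p.Prime) (G : Type*) [CommGroup G] [Finite G]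
    (hG : IsPGroup p G) :
    ∃ (ι : Type) (_ : Fintype ι) (a : ι → ℕ),
      Nonempty (G ≃* ∀ i, Multiplicative (ZMod (p ^ a i))) := by
  classical
  haveI : Fact p.Prime := ⟨hp⟩
  obtain ⟨ι, hι, n, h1, ⟨e⟩⟩ := CommGroup.equiv_prod_multiplicative_zmod_of_finite G
  have hpow : ∀ i, ∃ m, n i = p ^ m := by
    intro i
    haveI : NeZero (n i) := ⟨by have := h1 i; omega⟩
    have hinj : Function.Injective
        (e.symm.toMonoidHom.comp (MonoidHom.mulSingle (fun i => Multiplicative (ZMod (n i))) i)) :=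
      e.symm.injective.comp
        (fun x y h => Pi.mulSingle_injective (M := fun i => Multiplicative (ZMod (n i))) i h)
    have hPG : IsPGroup p (Multiplicative (ZMod (n i))) := hG.of_injective _ hinj
    obtain ⟨m, hm⟩ := IsPGroup.iff_card.mp hPG
    refine ⟨m, ?_⟩
    rwa [Nat.card_congr (Multiplicative.toAdd (α := ZMod (n i))), Nat.card_zmod] at hm
  choose a ha using hpow
  exact ⟨ι, hι, a, ⟨e.trans (MulEquiv.piCongrRight fun i =>
    (ha i) ▸ MulEquiv.refl (Multiplicative (ZMod (n i))))⟩⟩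

lemma card_hom_eq {p : ℕ} (hp : p.Prime) {ι κ : Type} [Fintype ι] [Fintype κ]
    (a : ι → ℕ) (c : κ → ℕ) :
    Nat.card ((∀ i, Multiplicative (ZMod (p ^ a i))) →* (∀ j, Multiplicative (ZMod (p ^ c j))))
      = p ^ (∑ i, ∑ j, min (a i) (c j)) := by
  rw [card_hom_pi]
  have heach : ∀ i, Nat.card {x : (∀ j, Multiplicative (ZMod (p ^ c j))) // x ^ (p ^ a i) = 1}
      = p ^ (∑ j, min (a i) (c j)) := by
    intro i
    rw [card_tors_pi, Finset.prod_congr rfl fun j _ => card_nsmul_ker hp (c j) (a i),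
      Finset.prod_pow_eq_pow_sum]
  rw [Finset.prod_congr rfl fun i _ => heach i, Finset.prod_pow_eq_pow_sum]

lemma filter_card_antitone {ι : Type} [Fintype ι] [DecidableEq ι] (f : ι → ℕ) (k l : ℕ)
    (h : k ≤ l) :
    (univ.filter fun i => l < f i).card ≤ (univ.filter fun i => k < f i).card := by
  classical
  refine Finset.card_le_card fun i hi => ?_
  simp only [Finset.mem_filter, Finset.mem_univ, true_and] at hi ⊢
  omega

lemma card_pi_zmod {p : ℕ} {ι : Type} [Fintype ι] (a : ι → ℕ) :
    Nat.card (∀ i, Multiplicative (ZMod (p ^ a i))) = p ^ (∑ i, a i) := by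
  rw [Nat.card_pi, Finset.prod_congr rfl fun i _ => ?_, Finset.prod_pow_eq_pow_sum]
  rw [Nat.card_congr (Multiplicative.toAdd (α := ZMod (p ^ a i))), Nat.card_zmod]

end Stmt5Aux

open Stmt5Aux

/-- If A, B, C, D are finite abelian p-groups, A is isomorphic to a proper subgroup of B
and C is isomorphic to a proper subgroup of D, then |Hom(A, C)| < |Hom(B, D)|. -/
theorem stmt_5 (p : ℕ) (hp : p.Prime)
    (A B C D : Type*) [CommGroup A] [CommGroup B] [CommGroup C] [CommGroup D]
    [Finite A] [Finite B] [Finite C] [Finite D]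
    (hA : IsPGroup p A) (hB : IsPGroup p B) (hC : IsPGroup p C) (hD : IsPGroup p D)
    (hAB : ∃ B' : Subgroup B, B' ≠ ⊤ ∧ Nonempty (A ≃* B'))
    (hCD : ∃ D' : Subgroup D, D' ≠ ⊤ ∧ Nonempty (C ≃* D')) :
    Nat.card (A →* C) < Nat.card (B →* D) := by
  classical
  obtain ⟨B', hB't, ⟨eAB⟩⟩ := hAB
  obtain ⟨D', hD't, ⟨eCD⟩⟩ := hCD
  obtain ⟨ιA, _, a, ⟨eA⟩⟩ := decomp p hp A hA
  obtain ⟨ιB, _, b, ⟨eB⟩⟩ := decomp p hp B hB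
  obtain ⟨ιC, _, c, ⟨eC⟩⟩ := decomp p hp C hC
  obtain ⟨ιD, _, d, ⟨eD⟩⟩ := decomp p hp D hD
  set N : ℕ := (∑ i, a i) + (∑ i, b i) + (∑ j, c j) + (∑ j, d j) + 1 with hN
  have haN : ∀ i, a i ≤ N := fun i => by
    have := Finset.single_le_sum (f := a) (fun i _ => Nat.zero_le _) (Finset.mem_univ i); omega
  have hbN : ∀ i, b i ≤ N := fun i => by
    have := Finset.single_le_sum (f := b) (fun i _ => Nat.zero_le _) (Finset.mem_univ i); omega
  have hcN : ∀ j, c j ≤ N := fun j => by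
    have := Finset.single_le_sum (f := c) (fun i _ => Nat.zero_le _) (Finset.mem_univ j); omega
  have hdN : ∀ j, d j ≤ N := fun j => by
    have := Finset.single_le_sum (f := d) (fun i _ => Nat.zero_le _) (Finset.mem_univ j); omega
  -- the two Hom cardinalities
  have hcardAC : Nat.card (A →* C)
      = p ^ ∑ k ∈ range N, (univ.filter fun i => k < a i).card *
          (univ.filter fun j => k < c j).card := by
    rw [Nat.card_congr ((MulEquiv.monoidHomCongrLeftEquiv eA).trans (MulEquiv.monoidHomCongrRightEquiv eC)), card_hom_eq hp a c,
      sum_min_eq a c N haN hcN]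
  have hcardBD : Nat.card (B →* D)
      = p ^ ∑ k ∈ range N, (univ.filter fun i => k < b i).card *
          (univ.filter fun j => k < d j).card := by
    rw [Nat.card_congr ((MulEquiv.monoidHomCongrLeftEquiv eB).trans (MulEquiv.monoidHomCongrRightEquiv eD)), card_hom_eq hp b d,
      sum_min_eq b d N hbN hdN]
  -- pointwise inequalities via the intrinsic invariant
  have hab : ∀ k, (univ.filter fun i => k < a i).card ≤ (univ.filter fun i => k < b i).card := by
    intro k
    have h1 : p ^ (univ.filter fun i => k < a i).card = intr p A k := by
      rw [intr_congr eA, intr_pi hp a k]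
    have h4 : intr p B k = p ^ (univ.filter fun i => k < b i).card := by
      rw [intr_congr eB, intr_pi hp b k]
    have hle : p ^ (univ.filter fun i => k < a i).card
        ≤ p ^ (univ.filter fun i => k < b i).card := by
      rw [h1, ← h4, intr_congr eAB]
      exact intr_le B'
    exact (Nat.pow_le_pow_iff_right hp.one_lt).mp hle
  have hcd : ∀ k, (univ.filter fun j => k < c j).card ≤ (univ.filter fun j => k < d j).card := by
    intro k
    have h1 : p ^ (univ.filter fun j => k < c j).card = intr p C k := by
      rw [intr_congr eC, intr_pi hp c k]
    have h4 : intr p D k = p ^ (univ.filter fun j => k < d j).card := by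
      rw [intr_congr eD, intr_pi hp d k]
    have hle : p ^ (univ.filter fun j => k < c j).card
        ≤ p ^ (univ.filter fun j => k < d j).card := by
      rw [h1, ← h4, intr_congr eCD]
      exact intr_le D'
    exact (Nat.pow_le_pow_iff_right hp.one_lt).mp hle
  -- strict inequalities of total sums
  have hcardA : Nat.card A < Nat.card B := by
    rw [Nat.card_congr eAB.toEquiv]
    refine lt_of_le_of_ne (Nat.card_le_card_of_injective _ Subtype.val_injective) fun h => ?_
    exact hB't (Subgroup.eq_top_of_card_eq _ h)
  have hcardC : Nat.card C < Nat.card D := by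
    rw [Nat.card_congr eCD.toEquiv]
    refine lt_of_le_of_ne (Nat.card_le_card_of_injective _ Subtype.val_injective) fun h => ?_
    exact hD't (Subgroup.eq_top_of_card_eq _ h)
  have hsum_ab : ∑ k ∈ range N, (univ.filter fun i => k < a i).card
      < ∑ k ∈ range N, (univ.filter fun i => k < b i).card := by
    rw [← sum_card_filter a N haN, ← sum_card_filter b N hbN]
    have := hcardA
    rw [Nat.card_congr eA.toEquiv, Nat.card_congr eB.toEquiv, card_pi_zmod, card_pi_zmod] at this
    exact (Nat.pow_lt_pow_iff_right hp.one_lt).mp this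
  have hsum_cd : ∑ k ∈ range N, (univ.filter fun j => k < c j).card
      < ∑ k ∈ range N, (univ.filter fun j => k < d j).card := by
    rw [← sum_card_filter c N hcN, ← sum_card_filter d N hdN]
    have := hcardC
    rw [Nat.card_congr eC.toEquiv, Nat.card_congr eD.toEquiv, card_pi_zmod, card_pi_zmod] at this
    exact (Nat.pow_lt_pow_iff_right hp.one_lt).mp this
  rw [hcardAC, hcardBD]
  refine (Nat.pow_lt_pow_iff_right hp.one_lt).mpr ?_
  exact numeric hab hcd (fun k l h => filter_card_antitone b k l h)
    (fun k l h => filter_card_antitone d k l h) hsum_ab hsum_cd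
end

section
/- Let G be a finite nilpotent group of class 2. For each class-preserving automorphism φ of G, the map f_φ : G/Z(G) → γ₂(G) sending gZ(G) to g⁻¹φ(g) is a well-defined group homomorphism, and φ ↦ f_φ is an injective group homomorphism from Aut_c(G) into Hom(G/Z(G), γ₂(G)). In particular |Aut_c(G)| ≤ |Hom(G/Z(G), γ₂(G))|. -/
/-- The subgroup of class-preserving automorphisms of `G`. -/
def classPreservingAuts (G : Type*) [Group G] : Subgroup (MulAut G) where
  carrier := {φ | ∀ x : G, IsConj x (φ x)}
  one_mem' := by intro x; simpa using IsConj.refl x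
  mul_mem' := by
    intro a b ha hb x
    simpa [MulAut.mul_apply] using (hb x).trans (ha (b x))
  inv_mem' := by
    intro a ha x
    have h := ha (a⁻¹ x)
    have hax : a (a⁻¹ x) = x := by
      simpa using a.apply_symm_apply x
    rw [hax] at h
    exact h.symm

section Aux

variable {G : Type*} [Group G]

open scoped commutatorElement

lemma aux_comm (φ : classPreservingAuts G) (g : G) :
    g⁻¹ * (φ : MulAut G) g ∈ commutator G := by
  obtain ⟨c, hc⟩ := φ.2 g
  have h : (φ : MulAut G) g = (c : G) * g * (c : G)⁻¹ :=
    (eq_mul_inv_iff_mul_eq.mpr hc.symm)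
  have : g⁻¹ * (φ : MulAut G) g = ⁅g⁻¹, (c : G)⁆ := by
    rw [h, commutatorElement_def]; group
  rw [this, commutator_def]
  exact Subgroup.commutator_mem_commutator (Subgroup.mem_top _) (Subgroup.mem_top _)

lemma aux_fix_center (φ : classPreservingAuts G) (z : G) (hz : z ∈ Subgroup.center G) :
    (φ : MulAut G) z = z := by
  obtain ⟨c, hc⟩ := φ.2 z
  have hz' : (c : G) * z = z * (c : G) := Subgroup.mem_center_iff.mp hz (c : G)
  rw [SemiconjBy, hz'] at hc
  exact (mul_right_cancel hc).symm

variable (h2 : commutator G ≤ Subgroup.center G)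

/-- raw map G →* center G -/
def auxHom (φ : classPreservingAuts G) : G →* Subgroup.center G where
  toFun g := ⟨g⁻¹ * (φ : MulAut G) g, h2 (aux_comm φ g)⟩
  map_one' := by ext; simp
  map_mul' g h := by
    ext
    have hcent : g⁻¹ * (φ : MulAut G) g ∈ Subgroup.center G := h2 (aux_comm φ g)
    have := (Subgroup.mem_center_iff.mp hcent h⁻¹).symm
    simp only [map_mul, Subgroup.coe_mul, mul_inv_rev]
    calc h⁻¹ * g⁻¹ * ((φ : MulAut G) g * (φ : MulAut G) h)
        = (h⁻¹ * (g⁻¹ * (φ : MulAut G) g)) * (φ : MulAut G) h := by group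
      _ = ((g⁻¹ * (φ : MulAut G) g) * h⁻¹) * (φ : MulAut G) h := by rw [this]
      _ = (g⁻¹ * (φ : MulAut G) g) * (h⁻¹ * (φ : MulAut G) h) := by group

def auxLift (φ : classPreservingAuts G) :
    (G ⧸ Subgroup.center G) →* Subgroup.center G :=
  QuotientGroup.lift (Subgroup.center G) (auxHom h2 φ) (by
    intro z hz
    ext
    simp [auxHom, aux_fix_center φ z hz])

lemma auxLift_mk (φ : classPreservingAuts G) (g : G) :
    ((auxLift h2 φ (QuotientGroup.mk g) : Subgroup.center G) : G)
      = g⁻¹ * (φ : MulAut G) g := rfl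

end Aux

open scoped IsMulCommutative

/-- For a finite group G of class 2, the map φ ↦ f_φ, f_φ(gZ(G)) = g⁻¹φ(g), is a
well-defined injective homomorphism from Aut_c(G) into Hom(G/Z(G), γ₂(G)); in
particular |Aut_c(G)| ≤ |Hom(G/Z(G), γ₂(G))|. (Here homomorphisms whose values lie
in γ₂(G) ≤ Z(G) are recorded as homomorphisms into Z(G) with image in γ₂(G).) -/
theorem stmt_8 (G : Type*) [Group G] [Finite G]
    (h2 : commutator G ≤ Subgroup.center G) :
    ∃ F : classPreservingAuts G →* ((G ⧸ Subgroup.center G) →* Subgroup.center G),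
      Function.Injective F ∧
      (∀ (φ : classPreservingAuts G) (g : G),
        ((F φ (QuotientGroup.mk g) : Subgroup.center G) : G) = g⁻¹ * (φ : MulAut G) g) ∧
      (∀ (φ : classPreservingAuts G) (q : G ⧸ Subgroup.center G),
        ((F φ q : Subgroup.center G) : G) ∈ commutator G) ∧
      Nat.card (classPreservingAuts G) ≤
        Nat.card {f : (G ⧸ Subgroup.center G) →* Subgroup.center G //
          ∀ q, ((f q : Subgroup.center G) : G) ∈ commutator G} := by
  refine ⟨{ toFun := auxLift h2, map_one' := ?_, map_mul' := ?_ }, ?_, ?_, ?_, ?_⟩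
  · refine MonoidHom.ext fun q => ?_
    induction q using QuotientGroup.induction_on with
    | H g => ext; simp [auxLift_mk]
  · intro φ ψ
    refine MonoidHom.ext fun q => ?_
    induction q using QuotientGroup.induction_on with
    | H g =>
      ext
      simp only [MonoidHom.mul_apply, Subgroup.coe_mul]
      rw [auxLift_mk, auxLift_mk, auxLift_mk]
      have hs : g⁻¹ * (ψ : MulAut G) g ∈ Subgroup.center G := h2 (aux_comm ψ g)
      have hfix := aux_fix_center φ _ hs
      have : ((φ * ψ : classPreservingAuts G) : MulAut G) g
          = (φ : MulAut G) ((ψ : MulAut G) g) := rfl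
      rw [this]
      have hψ : (ψ : MulAut G) g = g * (g⁻¹ * (ψ : MulAut G) g) := by group
      calc g⁻¹ * (φ : MulAut G) ((ψ : MulAut G) g)
          = g⁻¹ * (φ : MulAut G) (g * (g⁻¹ * (ψ : MulAut G) g)) := by rw [← hψ]
        _ = g⁻¹ * ((φ : MulAut G) g * (φ : MulAut G) (g⁻¹ * (ψ : MulAut G) g)) := by
            rw [map_mul]
        _ = g⁻¹ * (φ : MulAut G) g * (g⁻¹ * (ψ : MulAut G) g) := by rw [hfix]; group
  · intro φ ψ hφψ
    have h1 : ∀ g : G, g⁻¹ * (φ : MulAut G) g = g⁻¹ * (ψ : MulAut G) g := fun g =>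
      congrArg (fun f => ((f (QuotientGroup.mk g) : Subgroup.center G) : G)) hφψ
    ext g
    exact mul_left_cancel (h1 g)
  · intro φ g; exact auxLift_mk h2 φ g
  · intro φ q
    induction q using QuotientGroup.induction_on with
    | H g => exact aux_comm φ g
  · have hfin : Finite ((G ⧸ Subgroup.center G) →* Subgroup.center G) :=
      Finite.of_injective _ DFunLike.coe_injective
    set j : classPreservingAuts G →
        {f : (G ⧸ Subgroup.center G) →* Subgroup.center G //
          ∀ q, ((f q : Subgroup.center G) : G) ∈ commutator G} :=
      fun φ => ⟨auxLift h2 φ, fun q => by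
        induction q using QuotientGroup.induction_on with
        | H g => exact aux_comm φ g⟩
    have hj : Function.Injective j := by
      intro φ ψ h
      have hφψ : auxLift h2 φ = auxLift h2 ψ := congrArg Subtype.val h
      have h1 : ∀ g : G, g⁻¹ * (φ : MulAut G) g = g⁻¹ * (ψ : MulAut G) g := fun g =>
        congrArg (fun f => ((f (QuotientGroup.mk g) : Subgroup.center G) : G)) hφψ
      ext g
      exact mul_left_cancel (h1 g)
    exact Nat.card_le_card_of_injective j hj
end

section
/- Let G be a finite p-group of nilpotency class 2 such that γ₂(G) ≅ C_{p^m} × C_{p^m} for some positive integer m. Then G/Z(G) has a direct factor isomorphic to C_{p^m} × C_{p^m} × C_{p^m}; i.e., G/Z(G) ≅ C_{p^m} × C_{p^m} × C_{p^m} × H for some abelian group H. -/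
open commutatorElement

section Comm2
variable {G : Type*} [Group G] (hc : ∀ a b : G, ⁅a, b⁆ ∈ Subgroup.center G)

private lemma conj_eq' (a c : G) : a * c * a⁻¹ = ⁅a, c⁆ * c := by
  rw [commutatorElement_def]; group

include hc in
private lemma comm2_mul_left (a b c : G) : ⁅a * b, c⁆ = ⁅a, c⁆ * ⁅b, c⁆ := by
  have h1 : ∀ x : G, x * ⁅b, c⁆ = ⁅b, c⁆ * x := fun x =>
    Subgroup.mem_center_iff.mp (hc b c) x
  calc ⁅a * b, c⁆ = a * (b * c * b⁻¹) * a⁻¹ * c⁻¹ := by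
        rw [commutatorElement_def]; group
    _ = a * (⁅b, c⁆ * c) * a⁻¹ * c⁻¹ := by rw [conj_eq' b c]
    _ = a * ⁅b, c⁆ * (c * a⁻¹ * c⁻¹) := by group
    _ = ⁅b, c⁆ * a * (c * a⁻¹ * c⁻¹) := by rw [h1 a]
    _ = ⁅b, c⁆ * ⁅a, c⁆ := by rw [commutatorElement_def]; group
    _ = ⁅a, c⁆ * ⁅b, c⁆ := (h1 ⁅a, c⁆).symm

include hc in
private lemma comm2_mul_right (a b c : G) : ⁅a, b * c⁆ = ⁅a, b⁆ * ⁅a, c⁆ := by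
  rw [← commutatorElement_inv, comm2_mul_left hc, mul_inv_rev,
    ← commutatorElement_inv a b, ← commutatorElement_inv a c, inv_inv, inv_inv]
  exact (Subgroup.mem_center_iff.mp (hc a c) ⁅a, b⁆).symm

include hc in
private lemma comm2_inv_left (a b : G) : ⁅a⁻¹, b⁆ = ⁅a, b⁆⁻¹ := by
  have h := comm2_mul_left hc a⁻¹ a b
  rw [inv_mul_cancel, commutatorElement_one_left] at h
  exact eq_inv_of_mul_eq_one_left h.symm

include hc in
private lemma comm2_pow_left (a b : G) (n : ℕ) : ⁅a ^ n, b⁆ = ⁅a, b⁆ ^ n := by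
  induction n with
  | zero => simp
  | succ n ih => rw [pow_succ, comm2_mul_left hc, ih, pow_succ]

include hc in
private lemma comm2_zpow_left (a b : G) (n : ℤ) : ⁅a ^ n, b⁆ = ⁅a, b⁆ ^ n := by
  cases n with
  | ofNat n => simpa using comm2_pow_left hc a b n
  | negSucc n =>
      rw [zpow_negSucc, zpow_negSucc, comm2_inv_left hc, comm2_pow_left hc]

include hc in
private lemma comm2_pow_right (a b : G) (n : ℕ) : ⁅a, b ^ n⁆ = ⁅a, b⁆ ^ n := by
  rw [← commutatorElement_inv, comm2_pow_left hc, ← inv_pow, commutatorElement_inv]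

include hc in
private lemma comm2_zpow_right (a b : G) (n : ℤ) : ⁅a, b ^ n⁆ = ⁅a, b⁆ ^ n := by
  rw [← commutatorElement_inv, comm2_zpow_left hc, ← inv_zpow, commutatorElement_inv]

private lemma comm_center_right (a z : G) (hz : z ∈ Subgroup.center G) : ⁅a, z⁆ = 1 :=
  commutatorElement_eq_one_iff_commute.mpr (Subgroup.mem_center_iff.mp hz a)

private lemma comm_center_left (z b : G) (hz : z ∈ Subgroup.center G) : ⁅z, b⁆ = 1 :=
  commutatorElement_eq_one_iff_commute.mpr (Subgroup.mem_center_iff.mp hz b).symm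

end Comm2

private lemma zmod_dvd {n : ℕ} [NeZero n] (a b : ZMod n)
    (h : ∀ s : ZMod n, s * a = 0 → s * b = 0) : a ∣ b := by
  have hn : n ≠ 0 := NeZero.ne n
  set d := Nat.gcd a.val n with hd
  have hdn : d ∣ n := Nat.gcd_dvd_right _ _
  have hda : d ∣ a.val := Nat.gcd_dvd_left _ _
  have hdpos : 0 < d := Nat.gcd_pos_of_pos_right _ (Nat.pos_of_ne_zero hn)
  have hnd_pos : 0 < n / d := Nat.div_pos (Nat.le_of_dvd (Nat.pos_of_ne_zero hn) hdn) hdpos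
  have ha' : ((a.val : ℕ) : ZMod n) = a := by rw [ZMod.natCast_val, ZMod.cast_id]
  have hb' : ((b.val : ℕ) : ZMod n) = b := by rw [ZMod.natCast_val, ZMod.cast_id]
  -- (n/d) * a = 0
  have hsa : ((n / d : ℕ) : ZMod n) * a = 0 := by
    rw [← ha', ← Nat.cast_mul]
    obtain ⟨a', ha2⟩ := hda
    obtain ⟨n', hn2⟩ := hdn
    have hnd : n / d = n' := by rw [hn2, Nat.mul_div_cancel_left _ hdpos]
    have : (n / d) * a.val = n * a' := by rw [hnd, ha2, hn2]; ring
    rw [this, Nat.cast_mul, ZMod.natCast_self, zero_mul]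
  have hsb := h _ hsa
  rw [← hb', ← Nat.cast_mul] at hsb
  have hdvd : n ∣ (n / d) * b.val := (ZMod.natCast_eq_zero_iff _ _).mp hsb
  have hdb : d ∣ b.val := by
    obtain ⟨k, hk⟩ := hdvd
    have hk2 : (n / d) * b.val = (n / d) * (d * k) := by
      rw [hk]; conv_lhs => rw [← Nat.div_mul_cancel hdn]
      ring
    exact ⟨k, Nat.eq_of_mul_eq_mul_left hnd_pos hk2⟩
  -- Bezout
  have hbez := Nat.gcd_eq_gcd_ab a.val n
  have hcast : ((d : ℕ) : ZMod n) = a * ((Nat.gcdA a.val n : ℤ) : ZMod n) := by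
    have : ((d : ℤ) : ZMod n) = (((a.val : ℤ) * Nat.gcdA a.val n + (n : ℤ) * Nat.gcdB a.val n : ℤ) : ZMod n) := by
      rw [← hbez]
    push_cast at this ⊢
    rw [this, ha']
    simp [ZMod.natCast_self]
  refine ⟨((Nat.gcdA a.val n : ℤ) : ZMod n) * ((b.val / d : ℕ) : ZMod n), ?_⟩
  calc b = ((b.val : ℕ) : ZMod n) := hb'.symm
    _ = ((d * (b.val / d) : ℕ) : ZMod n) := by rw [Nat.mul_div_cancel' hdb]
    _ = ((d : ℕ) : ZMod n) * ((b.val / d : ℕ) : ZMod n) := by rw [Nat.cast_mul]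
    _ = a * (((Nat.gcdA a.val n : ℤ) : ZMod n) * ((b.val / d : ℕ) : ZMod n)) := by
        rw [hcast]; ring

private lemma baer_zmod (n : ℕ) [NeZero n] : Module.Baer (ZMod n) (ZMod n) := by
  haveI : IsPrincipalIdealRing (ZMod n) :=
    IsPrincipalIdealRing.of_surjective (Int.castRingHom (ZMod n)) ZMod.intCast_surjective
  intro I g
  obtain ⟨a, rfl⟩ := (IsPrincipalIdealRing.principal I).principal
  have hmem : a ∈ Ideal.span ({a} : Set (ZMod n)) := Submodule.mem_span_singleton_self a
  set b := g ⟨a, hmem⟩ with hbdef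
  have hab : a ∣ b := by
    refine zmod_dvd a b (fun s hs => ?_)
    have h0 : s • (⟨a, hmem⟩ : Ideal.span ({a} : Set (ZMod n))) = 0 :=
      Subtype.ext (by simpa [smul_eq_mul] using hs)
    calc s * b = s • g ⟨a, hmem⟩ := by rw [smul_eq_mul]
      _ = g (s • ⟨a, hmem⟩) := (map_smul g s _).symm
      _ = 0 := by rw [h0, map_zero]
  obtain ⟨c, hc⟩ := hab
  refine ⟨LinearMap.toSpanSingleton _ _ c, fun x hx => ?_⟩
  obtain ⟨s, hs⟩ := Ideal.mem_span_singleton.mp hx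
  have h1 : (⟨x, hx⟩ : Ideal.span ({a} : Set (ZMod n))) = s • ⟨a, hmem⟩ :=
    Subtype.ext (by simp [smul_eq_mul, hs, mul_comm])
  rw [h1, map_smul, ← hbdef, LinearMap.toSpanSingleton_apply]
  simp only [smul_eq_mul, hs, hc]
  ring

private lemma baer_prod {R : Type*} [Ring R] {M N : Type*} [AddCommGroup M] [AddCommGroup N]
    [Module R M] [Module R N] (hM : Module.Baer R M) (hN : Module.Baer R N) :
    Module.Baer R (M × N) := by
  intro I g
  obtain ⟨g1, hg1⟩ := hM I (LinearMap.fst R M N ∘ₗ g)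
  obtain ⟨g2, hg2⟩ := hN I (LinearMap.snd R M N ∘ₗ g)
  exact ⟨g1.prod g2, fun x mem => Prod.ext (by simpa using hg1 x mem) (by simpa using hg2 x mem)⟩
private lemma step3 {V : Type*} [CommGroup V] (p m : ℕ) (hp : p.Prime) (hm : 0 < m)
    (expV : ∀ x : V, x ^ (p ^ m) = 1) (u v w : V)
    (hfull : ∀ α β γ : ℤ, u ^ α * v ^ β * w ^ γ = 1 →
      ((p ^ m : ℕ) : ℤ) ∣ α ∧ ((p ^ m : ℕ) : ℤ) ∣ β ∧ ((p ^ m : ℕ) : ℤ) ∣ γ) :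
    ∃ H : Subgroup V, Nonempty (V ≃* (Multiplicative (ZMod (p ^ m)) ×
      Multiplicative (ZMod (p ^ m)) × Multiplicative (ZMod (p ^ m)) × H)) := by
  haveI : NeZero (p ^ m) := ⟨pow_ne_zero _ hp.pos.ne'⟩
  haveI : Module (ZMod (p ^ m)) (Additive V) := AddCommGroup.zmodModule (by
    intro x
    have h1 : Additive.ofMul (x.toMul ^ (p ^ m)) = (p ^ m) • x := by
      rw [ofMul_pow, ofMul_toMul]
    rw [← h1, expV, ofMul_one])
  set X := Additive.ofMul u with hX
  set Y := Additive.ofMul v with hY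
  set Z := Additive.ofMul w with hZ
  let iL : (ZMod (p ^ m) × ZMod (p ^ m) × ZMod (p ^ m)) →ₗ[ZMod (p ^ m)] Additive V :=
  { toFun := fun t => t.1 • X + t.2.1 • Y + t.2.2 • Z
    map_add' := by
      intro s t
      simp only [Prod.fst_add, Prod.snd_add, add_smul]
      abel
    map_smul' := by
      intro c t
      simp only [Prod.smul_fst, Prod.smul_snd, smul_eq_mul, RingHom.id_apply, mul_smul, smul_add] }
  have hiL0 : ∀ t, iL t = 0 → t = 0 := by
    rintro ⟨a, b, c⟩ h
    have hval : ∀ d : ZMod (p ^ m), d = ((d.val : ℕ) : ZMod (p ^ m)) := fun d => by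
      rw [ZMod.natCast_val, ZMod.cast_id]
    have h' : (a.val : ZMod (p ^ m)) • X + (b.val : ZMod (p ^ m)) • Y
        + (c.val : ZMod (p ^ m)) • Z = 0 := by
      rw [← hval a, ← hval b, ← hval c]; exact h
    rw [Nat.cast_smul_eq_nsmul, Nat.cast_smul_eq_nsmul, Nat.cast_smul_eq_nsmul] at h'
    have hmul : Additive.ofMul (u ^ a.val * v ^ b.val * w ^ c.val) = 0 := by
      rw [ofMul_mul, ofMul_mul, ofMul_pow, ofMul_pow, ofMul_pow, ← hX, ← hY, ← hZ]
      exact h'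
    have hone : u ^ (a.val : ℤ) * v ^ (b.val : ℤ) * w ^ (c.val : ℤ) = 1 := by
      rw [zpow_natCast, zpow_natCast, zpow_natCast]
      exact Additive.ofMul.injective (by rw [hmul, ofMul_one])
    obtain ⟨ha, hb, hc⟩ := hfull _ _ _ hone
    have hz : ∀ d : ZMod (p ^ m), (p ^ m : ℕ) ∣ d.val → d = 0 := fun d hd => by
      rw [hval d]
      exact (ZMod.natCast_eq_zero_iff _ _).mpr hd
    refine Prod.ext (hz a (Int.natCast_dvd_natCast.mp ha)) (Prod.ext ?_ ?_) <;>
      [exact hz b (Int.natCast_dvd_natCast.mp hb); exact hz c (Int.natCast_dvd_natCast.mp hc)]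
  have hiL : Function.Injective iL := by
    intro s t hst
    have := hiL0 (s - t) (by rw [map_sub, hst, sub_self])
    exact sub_eq_zero.mp this
  obtain ⟨gr, hgr⟩ := (baer_prod (baer_zmod (p ^ m))
    (baer_prod (baer_zmod (p ^ m)) (baer_zmod (p ^ m)))).extension_property iL hiL LinearMap.id
  have hret : ∀ t, gr (iL t) = t := fun t => by
    have := DFunLike.congr_fun hgr t
    simpa using this
  refine ⟨{ carrier := {x : V | gr (Additive.ofMul x) = 0}
            one_mem' := by simp only [Set.mem_setOf_eq, ofMul_one, map_zero]
            mul_mem' := by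
              intro a b ha hb
              simp only [Set.mem_setOf_eq, ofMul_mul, map_add] at *
              rw [ha, hb, add_zero]
            inv_mem' := by
              intro a ha
              simp only [Set.mem_setOf_eq, ofMul_inv, map_neg] at *
              rw [ha, neg_zero] }, ⟨?_⟩⟩
  have hmem : ∀ x : V, gr (Additive.ofMul (x * ((iL (gr (Additive.ofMul x))).toMul)⁻¹)) = 0 := by
    intro x
    rw [ofMul_mul, ofMul_inv, ofMul_toMul, map_add, map_neg, hret, add_neg_cancel]
  refine { toFun := fun x => (Multiplicative.ofAdd (gr (Additive.ofMul x)).1,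
              Multiplicative.ofAdd (gr (Additive.ofMul x)).2.1,
              Multiplicative.ofAdd (gr (Additive.ofMul x)).2.2,
              ⟨x * ((iL (gr (Additive.ofMul x))).toMul)⁻¹, hmem x⟩)
           invFun := fun y => (iL (y.1.toAdd, y.2.1.toAdd, y.2.2.1.toAdd)).toMul * (y.2.2.2 : V)
           left_inv := ?_, right_inv := ?_, map_mul' := ?_ }
  · intro x
    simp only [toAdd_ofAdd]
    have hpe : ((gr (Additive.ofMul x)).1, (gr (Additive.ofMul x)).2.1,
        (gr (Additive.ofMul x)).2.2) = gr (Additive.ofMul x) := rfl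
    rw [hpe, mul_comm x, ← mul_assoc, mul_inv_cancel, one_mul]
  · rintro ⟨y1, y2, y3, y4⟩
    have hy4 : gr (Additive.ofMul (y4 : V)) = 0 := y4.2
    have hgr0 : gr (Additive.ofMul ((iL (y1.toAdd, y2.toAdd, y3.toAdd)).toMul * (y4 : V)))
        = (y1.toAdd, y2.toAdd, y3.toAdd) := by
      rw [ofMul_mul, ofMul_toMul, map_add, hret, hy4, add_zero]
    simp only [hgr0, ofAdd_toAdd]
    refine Prod.ext rfl (Prod.ext rfl (Prod.ext rfl (Subtype.ext ?_)))
    show (iL (y1.toAdd, y2.toAdd, y3.toAdd)).toMul * (y4 : V)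
        * ((iL (y1.toAdd, y2.toAdd, y3.toAdd)).toMul)⁻¹ = (y4 : V)
    rw [mul_comm _ (y4 : V), mul_assoc, mul_inv_cancel, mul_one]
  · intro x y
    have hxy : gr (Additive.ofMul (x * y)) = gr (Additive.ofMul x) + gr (Additive.ofMul y) := by
      rw [ofMul_mul, map_add]
    simp only [hxy, Prod.fst_add, Prod.snd_add, ofAdd_add, Prod.mk_mul_mk]
    refine Prod.ext rfl (Prod.ext rfl (Prod.ext rfl (Subtype.ext ?_)))
    show x * y * ((iL (gr (Additive.ofMul x) + gr (Additive.ofMul y))).toMul)⁻¹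
        = (x * ((iL (gr (Additive.ofMul x))).toMul)⁻¹) * (y * ((iL (gr (Additive.ofMul y))).toMul)⁻¹)
    rw [map_add, toMul_add, mul_inv]
    exact mul_mul_mul_comm x y _ _


/-- Let G be a finite p-group of class 2 with γ₂(G) ≅ C_{p^m} × C_{p^m} (m ≥ 1).
Then G/Z(G) ≅ C_{p^m} × C_{p^m} × C_{p^m} × H for some abelian group H
(which may be taken to be a subgroup of G/Z(G)). -/
theorem stmt_16 (p : ℕ) (hp : p.Prime) (G : Type*) [Group G] [Finite G]
    (hG : IsPGroup p G) (h2 : commutator G ≤ Subgroup.center G) (m : ℕ) (hm : 0 < m)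
    (hiso : Nonempty ((commutator G) ≃*
      (Multiplicative (ZMod (p ^ m)) × Multiplicative (ZMod (p ^ m))))) :
    ∃ H : Subgroup (G ⧸ Subgroup.center G),
      Nonempty ((G ⧸ Subgroup.center G) ≃*
        (Multiplicative (ZMod (p ^ m)) × Multiplicative (ZMod (p ^ m)) ×
          Multiplicative (ZMod (p ^ m)) × H)) := by
  obtain ⟨φ⟩ := hiso
  have hp1 : 1 < p := hp.one_lt
  haveI : NeZero (p ^ m) := ⟨pow_ne_zero _ hp.pos.ne'⟩
  have hcent : ∀ a b : G, ⁅a, b⁆ ∈ Subgroup.center G := fun a b =>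
    h2 (Subgroup.commutator_mem_commutator (Subgroup.mem_top a) (Subgroup.mem_top b))
  have hmemC : ∀ a b : G, ⁅a, b⁆ ∈ commutator G := fun a b =>
    Subgroup.commutator_mem_commutator (Subgroup.mem_top a) (Subgroup.mem_top b)
  -- exponent of the commutator subgroup divides p^m
  have hpow1 : ∀ y : Multiplicative (ZMod (p ^ m)) × Multiplicative (ZMod (p ^ m)),
      y ^ (p ^ m) = 1 := by
    intro y
    have hz : ∀ z : Multiplicative (ZMod (p ^ m)), z ^ (p ^ m) = 1 := by
      intro z
      apply Multiplicative.toAdd.injective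
      rw [toAdd_pow, toAdd_one, nsmul_eq_mul, ZMod.natCast_self, zero_mul]
    refine Prod.ext ?_ ?_
    · rw [Prod.pow_fst, Prod.fst_one, hz]
    · rw [Prod.pow_snd, Prod.snd_one, hz]
  have hexpG : ∀ x, x ∈ commutator G → x ^ (p ^ m) = 1 := by
    intro x hx
    have h1 : (⟨x, hx⟩ : ↥(commutator G)) ^ (p ^ m) = 1 :=
      φ.injective (by rw [map_pow, map_one, hpow1])
    have := congrArg (Subtype.val) h1
    simpa using this
  have hZq : ∀ g : G, g ^ (p ^ m) ∈ Subgroup.center G := by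
    intro g
    rw [Subgroup.mem_center_iff]
    intro h
    have h1 : ⁅g ^ (p ^ m), h⁆ = 1 := by
      rw [comm2_pow_left hcent, hexpG _ (hmemC g h)]
    exact (commutatorElement_eq_one_iff_commute.mp h1).eq.symm
  have hcm : ∀ x y : G ⧸ Subgroup.center G, Commute x y := by
    intro x y
    induction x using QuotientGroup.induction_on with | _ g =>
    induction y using QuotientGroup.induction_on with | _ h =>
    show _ = _
    rw [← QuotientGroup.mk_mul, ← QuotientGroup.mk_mul]
    refine QuotientGroup.eq.mpr ?_
    have h0 : (g * h)⁻¹ * (h * g) = ⁅h⁻¹, g⁻¹⁆ := by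
      rw [commutatorElement_def]; group
    rw [h0]; exact hcent _ _
  have pairmem : ∀ (a b x : G ⧸ Subgroup.center G), x ∈ Subgroup.closure {a, b} →
      ∃ k l : ℤ, a ^ k * b ^ l = x := by
    intro a b x hx
    refine Subgroup.closure_induction ?_ ?_ ?_ ?_ hx
    · rintro y (rfl | rfl)
      · exact ⟨1, 0, by group⟩
      · exact ⟨0, 1, by group⟩
    · exact ⟨0, 0, by group⟩
    · rintro y z _ _ ⟨k, l, rfl⟩ ⟨k', l', rfl⟩
      refine ⟨k + k', l + l', ?_⟩
      calc a ^ (k + k') * b ^ (l + l') = a ^ k * (a ^ k' * b ^ l) * b ^ l' := by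
            rw [zpow_add, zpow_add]; group
        _ = a ^ k * (b ^ l * a ^ k') * b ^ l' := by rw [((hcm a b).zpow_zpow k' l).eq]
        _ = a ^ k * b ^ l * (a ^ k' * b ^ l') := by group
    · rintro y _ ⟨k, l, rfl⟩
      refine ⟨-k, -l, ?_⟩
      calc a ^ (-k) * b ^ (-l) = b ^ (-l) * a ^ (-k) := ((hcm a b).zpow_zpow (-k) (-l)).eq
        _ = (a ^ k * b ^ l)⁻¹ := by rw [mul_inv_rev, zpow_neg, zpow_neg]
  have expV : ∀ x : G ⧸ Subgroup.center G, x ^ (p ^ m) = 1 := by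
    intro x
    induction x using QuotientGroup.induction_on with | _ g =>
    rw [← QuotientGroup.mk_pow]
    exact (QuotientGroup.eq_one_iff _).mpr (hZq g)
  set r := p ^ (m - 1) with hrdef
  have hrp : r * p = p ^ m := by rw [hrdef, ← pow_succ]; congr 1; omega
  have hr0 : 0 < r := pow_pos hp.pos _
  have hswp : ∀ (x : G ⧸ Subgroup.center G) (a : ℤ), (x ^ a) ^ r = (x ^ r) ^ a := by
    intro x a
    rw [← zpow_natCast (x ^ a), ← zpow_mul, mul_comm, zpow_mul, zpow_natCast]
  have hmk1 : ∀ x : G, ((x : G ⧸ Subgroup.center G) ^ r = 1) ↔ x ^ r ∈ Subgroup.center G := by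
    intro x
    rw [← QuotientGroup.mk_pow]
    exact QuotientGroup.eq_one_iff _
  -- the subgroup T of elements of the commutator subgroup killed by r
  let T : Subgroup G :=
    { carrier := {x | x ∈ commutator G ∧ x ^ r = 1}
      one_mem' := ⟨one_mem _, one_pow r⟩
      mul_mem' := by
        rintro a b ⟨haC, haR⟩ ⟨hbC, hbR⟩
        refine ⟨mul_mem haC hbC, ?_⟩
        have hcm : Commute a b := ((Subgroup.mem_center_iff.mp (h2 haC)) b).symm
        rw [hcm.mul_pow, haR, hbR, one_mul]
      inv_mem' := by
        rintro a ⟨haC, haR⟩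
        exact ⟨inv_mem haC, by rw [inv_pow, haR, inv_one]⟩ }
  have hmemT : ∀ x : G, x ∈ T ↔ x ∈ commutator G ∧ x ^ r = 1 := fun x => Iff.rfl
  have hrne : ¬ (p ^ m ∣ r) := by
    intro hdvd
    have h1 := Nat.le_of_dvd hr0 hdvd
    have h2' : r < p ^ m := by
      rw [← hrp]
      exact lt_mul_iff_one_lt_right hr0 |>.mpr hp1
    omega
  -- step B1: a commutator of order > r exists
  have hB1 : ∃ a b : G, ⁅a, b⁆ ^ r ≠ 1 := by
    by_contra hall
    push_neg at hall
    have hle : commutator G ≤ T := by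
      rw [commutator_eq_closure]
      refine (Subgroup.closure_le T).mpr ?_
      rintro x ⟨a, b, rfl⟩
      exact ⟨hmemC a b, hall a b⟩
    set ξ : ↥(commutator G) := φ.symm (Multiplicative.ofAdd (1 : ZMod (p ^ m)), 1) with hξ
    have h1 : (ξ : G) ^ r = 1 := (hle ξ.2).2
    have h2' : ξ ^ r = 1 := Subtype.ext (by rw [SubmonoidClass.coe_pow, h1, OneMemClass.coe_one])
    have h3 := congrArg φ h2'
    rw [map_pow, map_one, hξ, MulEquiv.apply_symm_apply] at h3
    have h4 := congrArg Prod.fst h3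
    rw [Prod.pow_fst, Prod.fst_one] at h4
    have h5 := congrArg Multiplicative.toAdd h4
    rw [toAdd_pow, toAdd_ofAdd, toAdd_one, nsmul_eq_mul, mul_one] at h5
    exact hrne ((ZMod.natCast_eq_zero_iff _ _).mp h5)
  obtain ⟨u₀, y₀, hc0r⟩ := hB1
  set c0 := ⁅u₀, y₀⁆ with hc0
  set u : G ⧸ Subgroup.center G := (u₀ : G ⧸ Subgroup.center G) with hu
  set v : G ⧸ Subgroup.center G := (y₀ : G ⧸ Subgroup.center G) with hv
  have hs1 : u ^ r ≠ 1 := by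
    intro h1
    have hz := (hmk1 u₀).mp h1
    exact hc0r (by rw [hc0, ← comm2_pow_left hcent, comm_center_left _ _ hz])
  have hs2 : v ^ r ∉ Subgroup.zpowers (u ^ r) := by
    intro hmem
    obtain ⟨k, hk⟩ := Subgroup.mem_zpowers_iff.mp hmem
    have hzz : (v * (u ^ k)⁻¹) ^ r = 1 := by
      rw [(hcm v (u ^ k)⁻¹).mul_pow, inv_pow, hswp, hk, mul_inv_cancel]
    have hmkeq : ((y₀ * (u₀ ^ k)⁻¹ : G) : G ⧸ Subgroup.center G) = v * (u ^ k)⁻¹ := by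
      rw [QuotientGroup.mk_mul, QuotientGroup.mk_inv, QuotientGroup.mk_zpow]
    have hcen : (y₀ * (u₀ ^ k)⁻¹) ^ r ∈ Subgroup.center G :=
      (hmk1 _).mp (by rw [hmkeq]; exact hzz)
    have hy : y₀ = (y₀ * (u₀ ^ k)⁻¹) * u₀ ^ k := by group
    refine hc0r ?_
    rw [hc0]
    conv_lhs => rw [hy]
    rw [comm2_mul_right hcent, comm2_zpow_right hcent, commutatorElement_self, one_zpow, mul_one,
      ← comm2_pow_right hcent]
    exact comm_center_right _ _ hcen
  -- find the third independent element
  have hw3 : ∃ w : G ⧸ Subgroup.center G, w ^ r ∉ Subgroup.closure {u ^ r, v ^ r} := by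
    by_contra hall
    push_neg at hall
    -- counting contradiction
    have hTK1 : ∀ a b : G, a ^ r ∈ Subgroup.center G → ⁅a, b⁆ ∈ T := fun a b ha =>
      ⟨hmemC a b, by rw [← comm2_pow_left hcent, comm_center_left _ _ ha]⟩
    have hTK2 : ∀ a b : G, b ^ r ∈ Subgroup.center G → ⁅a, b⁆ ∈ T := fun a b hb =>
      ⟨hmemC a b, by rw [← comm2_pow_right hcent, comm_center_right _ _ hb]⟩
    have hc0cent : ∀ k : ℤ, c0 ^ k ∈ Subgroup.center G := fun k =>
      Subgroup.zpow_mem _ (h2 (hmemC u₀ y₀)) k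
    let K : Subgroup G :=
      { carrier := {x | ∃ i : ℤ, ∃ t, t ∈ T ∧ x = c0 ^ i * t}
        one_mem' := ⟨0, 1, T.one_mem, by simp⟩
        mul_mem' := by
          rintro a b ⟨i, t, ht, rfl⟩ ⟨j, s, hs, rfl⟩
          refine ⟨i + j, t * s, T.mul_mem ht hs, ?_⟩
          have hcm : t * c0 ^ j = c0 ^ j * t := Subgroup.mem_center_iff.mp (hc0cent j) t
          calc c0 ^ i * t * (c0 ^ j * s) = c0 ^ i * (t * c0 ^ j) * s := by group
            _ = c0 ^ i * (c0 ^ j * t) * s := by rw [hcm]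
            _ = c0 ^ (i + j) * (t * s) := by rw [zpow_add]; group
        inv_mem' := by
          rintro a ⟨i, t, ht, rfl⟩
          refine ⟨-i, t⁻¹, T.inv_mem ht, ?_⟩
          rw [mul_inv_rev, ← zpow_neg]
          exact Subgroup.mem_center_iff.mp (hc0cent (-i)) t⁻¹
        }
    have hTleK : ∀ t : G, t ∈ T → t ∈ K := fun t ht => ⟨0, t, ht, by simp⟩
    have hc0K : ∀ i : ℤ, c0 ^ i ∈ K := fun i => ⟨i, 1, T.one_mem, by simp⟩
    have hdec : ∀ g : G, ∃ (k l : ℤ) (t : G),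
        t ^ r ∈ Subgroup.center G ∧ g = t * y₀ ^ l * u₀ ^ k := by
      intro g
      obtain ⟨k, l, hkl⟩ := pairmem _ _ _ (hall (g : G ⧸ Subgroup.center G))
      refine ⟨k, l, g * (u₀ ^ k)⁻¹ * (y₀ ^ l)⁻¹, ?_, by group⟩
      refine (hmk1 _).mp ?_
      rw [QuotientGroup.mk_mul, QuotientGroup.mk_mul, QuotientGroup.mk_inv,
        QuotientGroup.mk_inv, QuotientGroup.mk_zpow, QuotientGroup.mk_zpow,
        (hcm _ _).mul_pow, (hcm _ _).mul_pow, inv_pow, inv_pow, hswp, hswp, ← hkl,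
        (hcm ((u ^ r) ^ k) ((v ^ r) ^ l)).eq]
      simp only [hu, hv]
      group
    have hCK : commutator G ≤ K := by
      rw [commutator_eq_closure]
      refine (Subgroup.closure_le K).mpr ?_
      rintro x ⟨a, b, rfl⟩
      obtain ⟨k, l, t, htc, rfl⟩ := hdec a
      obtain ⟨k', l', s, hsc, rfl⟩ := hdec b
      rw [comm2_mul_left hcent, comm2_mul_left hcent]
      have hyu : ⁅y₀, u₀⁆ ∈ K := by
        have : ⁅y₀, u₀⁆ = c0⁻¹ := by rw [hc0, commutatorElement_inv]
        rw [this, ← zpow_neg_one]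
        exact hc0K (-1)
      have huy : ⁅u₀, y₀⁆ ∈ K := by rw [← hc0, ← zpow_one c0]; exact hc0K 1
      refine K.mul_mem (K.mul_mem ?_ ?_) ?_
      · exact hTleK _ (hTK1 _ _ htc)
      · rw [comm2_zpow_left hcent]
        refine K.zpow_mem ?_ l
        rw [comm2_mul_right hcent, comm2_mul_right hcent]
        refine K.mul_mem (K.mul_mem ?_ ?_) ?_
        · exact hTleK _ (hTK2 _ _ hsc)
        · rw [comm2_zpow_right hcent, commutatorElement_self, one_zpow]
          exact K.one_mem
        · rw [comm2_zpow_right hcent]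
          exact K.zpow_mem hyu k'
      · rw [comm2_zpow_left hcent]
        refine K.zpow_mem ?_ k
        rw [comm2_mul_right hcent, comm2_mul_right hcent]
        refine K.mul_mem (K.mul_mem ?_ ?_) ?_
        · exact hTleK _ (hTK2 _ _ hsc)
        · rw [comm2_zpow_right hcent]
          exact K.zpow_mem huy l'
        · rw [comm2_zpow_right hcent, commutatorElement_self, one_zpow]
          exact K.one_mem
    have hc0pT : c0 ^ p ∈ T := by
      refine ⟨Subgroup.pow_mem _ (hmemC u₀ y₀) p, ?_⟩
      rw [← pow_mul, mul_comm p r, hrp]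
      exact hexpG _ (hmemC u₀ y₀)
    -- surjection from Fin p × T onto the commutator subgroup
    have hsurj : Function.Surjective (fun it : Fin p × ↥T =>
        (⟨c0 ^ (it.1 : ℕ) * (it.2 : G),
          Subgroup.mul_mem _ (Subgroup.pow_mem _ (hmemC u₀ y₀) _) it.2.2.1⟩ :
            ↥(commutator G))) := by
      rintro ⟨x, hx⟩
      obtain ⟨i, t, ht, hxe⟩ := hCK hx
      have h1 : 0 ≤ i % p := Int.emod_nonneg i (by exact_mod_cast hp.pos.ne')
      have h2' : i % p < p := Int.emod_lt_of_pos i (by exact_mod_cast hp.pos)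
      refine ⟨(⟨(i % p).toNat, by omega⟩,
        ⟨(c0 ^ p) ^ (i / p) * t, T.mul_mem (T.zpow_mem hc0pT _) ht⟩), ?_⟩
      apply Subtype.ext
      show c0 ^ ((i % p).toNat) * ((c0 ^ p) ^ (i / p) * t) = x
      rw [hxe, ← zpow_natCast c0 (i % p).toNat, Int.toNat_of_nonneg h1,
        ← zpow_natCast c0 p, ← zpow_mul, ← mul_assoc, ← zpow_add, Int.emod_add_mul_ediv]
    -- injection from T into Fin r × Fin r
    have hinj : ∃ J : ↥T → Fin r × Fin r, Function.Injective J := by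
      have hdd : ∀ t : ↥T, (φ ⟨(t : G), t.2.1⟩) ^ r = 1 := by
        intro t
        rw [← map_pow, ← map_one φ]
        congr 1
        exact Subtype.ext (by rw [SubmonoidClass.coe_pow, OneMemClass.coe_one]; exact t.2.2)
      have hdvd : ∀ t : ↥T, p ∣ ((φ ⟨(t : G), t.2.1⟩).1.toAdd).val ∧
          p ∣ ((φ ⟨(t : G), t.2.1⟩).2.toAdd).val := by
        intro t
        constructor
        · have h4 := congrArg Prod.fst (hdd t)
          rw [Prod.pow_fst, Prod.fst_one] at h4
          have h5 := congrArg Multiplicative.toAdd h4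
          rw [toAdd_pow, toAdd_one, nsmul_eq_mul] at h5
          have h6 : ((r * ((φ ⟨(t : G), t.2.1⟩).1.toAdd).val : ℕ) : ZMod (p ^ m)) = 0 := by
            rw [Nat.cast_mul, ZMod.natCast_val, ZMod.cast_id]
            exact h5
          obtain ⟨k, hk⟩ := (ZMod.natCast_eq_zero_iff _ _).mp h6
          have hk2 : r * ((φ ⟨(t : G), t.2.1⟩).1.toAdd).val = r * (p * k) := by
            rw [hk, ← hrp]; ring
          exact ⟨k, Nat.eq_of_mul_eq_mul_left hr0 hk2⟩
        · have h4 := congrArg Prod.snd (hdd t)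
          rw [Prod.pow_snd, Prod.snd_one] at h4
          have h5 := congrArg Multiplicative.toAdd h4
          rw [toAdd_pow, toAdd_one, nsmul_eq_mul] at h5
          have h6 : ((r * ((φ ⟨(t : G), t.2.1⟩).2.toAdd).val : ℕ) : ZMod (p ^ m)) = 0 := by
            rw [Nat.cast_mul, ZMod.natCast_val, ZMod.cast_id]
            exact h5
          obtain ⟨k, hk⟩ := (ZMod.natCast_eq_zero_iff _ _).mp h6
          have hk2 : r * ((φ ⟨(t : G), t.2.1⟩).2.toAdd).val = r * (p * k) := by
            rw [hk, ← hrp]; ring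
          exact ⟨k, Nat.eq_of_mul_eq_mul_left hr0 hk2⟩
      have hbound : ∀ d : ZMod (p ^ m), d.val / p < r := by
        intro d
        rw [Nat.div_lt_iff_lt_mul hp.pos, hrp]
        exact d.val_lt
      refine ⟨fun t => (⟨((φ ⟨(t : G), t.2.1⟩).1.toAdd).val / p, hbound _⟩,
        ⟨((φ ⟨(t : G), t.2.1⟩).2.toAdd).val / p, hbound _⟩), ?_⟩
      intro t t' h
      simp only [Prod.mk.injEq, Fin.mk.injEq] at h
      obtain ⟨h1, h2'⟩ := h
      have e1 : ((φ ⟨(t : G), t.2.1⟩).1.toAdd).val = ((φ ⟨(t' : G), t'.2.1⟩).1.toAdd).val := by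
        have d1 := (hdvd t).1; have d2 := (hdvd t').1
        rw [← Nat.div_mul_cancel d1, ← Nat.div_mul_cancel d2, h1]
      have e2 : ((φ ⟨(t : G), t.2.1⟩).2.toAdd).val = ((φ ⟨(t' : G), t'.2.1⟩).2.toAdd).val := by
        have d1 := (hdvd t).2; have d2 := (hdvd t').2
        rw [← Nat.div_mul_cancel d1, ← Nat.div_mul_cancel d2, h2']
      have e3 : φ ⟨(t : G), t.2.1⟩ = φ ⟨(t' : G), t'.2.1⟩ := by
        refine Prod.ext ?_ ?_
        · exact Multiplicative.toAdd.injective (ZMod.val_injective _ e1)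
        · exact Multiplicative.toAdd.injective (ZMod.val_injective _ e2)
      have e4 := φ.injective e3
      exact Subtype.ext (congrArg (fun z : ↥(commutator G) => (z : G)) e4)
    obtain ⟨J, hJ⟩ := hinj
    have hcard1 : Nat.card ↥(commutator G) ≤ p * (r * r) := by
      calc Nat.card ↥(commutator G) ≤ Nat.card (Fin p × ↥T) :=
            Nat.card_le_card_of_surjective _ hsurj
        _ = p * Nat.card ↥T := by
            rw [Nat.card_prod]
            simp [Nat.card_eq_fintype_card]
        _ ≤ p * (r * r) := by
            refine Nat.mul_le_mul_left p ?_
            calc Nat.card ↥T ≤ Nat.card (Fin r × Fin r) := Nat.card_le_card_of_injective J hJ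
              _ = r * r := by
                  rw [Nat.card_prod]
                  simp [Nat.card_eq_fintype_card]
    have hcard2 : Nat.card ↥(commutator G) = (p ^ m) * (p ^ m) := by
      rw [Nat.card_congr φ.toEquiv, Nat.card_prod, Nat.card_congr Multiplicative.toAdd,
        Nat.card_zmod]
    rw [hcard2] at hcard1
    have heq : (p ^ m) * (p ^ m) = (p * (r * r)) * p := by rw [← hrp]; ring
    rw [heq] at hcard1
    have hpos : 0 < p * (r * r) := by positivity
    have : p ≤ 1 := by
      have h9 : (p * (r * r)) * p ≤ (p * (r * r)) * 1 := by rw [mul_one]; exact hcard1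
      exact Nat.le_of_mul_le_mul_left h9 hpos
    omega
  obtain ⟨w, hs3⟩ := hw3
  -- the "reduce mod p" lemma
  have key : ∀ (x : G ⧸ Subgroup.center G) (S : Subgroup (G ⧸ Subgroup.center G)) (γ : ℤ),
      x ^ p = 1 → x ^ γ ∈ S → ¬ ((p : ℤ) ∣ γ) → x ∈ S := by
    intro x S γ hxp hγ hnd
    have hpne : (p : ℤ) ≠ 0 := by exact_mod_cast hp.pos.ne'
    have hnn : 0 ≤ γ % (p : ℤ) := Int.emod_nonneg γ hpne
    obtain ⟨n, hγmod⟩ : ∃ n : ℕ, γ % (p : ℤ) = (n : ℤ) :=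
      ⟨(γ % (p : ℤ)).toNat, (Int.toNat_of_nonneg hnn).symm⟩
    have hltZ : γ % (p : ℤ) < p := Int.emod_lt_of_pos γ (by exact_mod_cast hp.pos)
    have hnp : n < p := by omega
    have hn0 : n ≠ 0 := by
      intro h0
      exact hnd (Int.dvd_of_emod_eq_zero (by omega))
    have hcop : Nat.gcd n p = 1 :=
      Nat.Coprime.symm (hp.coprime_iff_not_dvd.mpr (fun hdvd =>
        absurd (Nat.le_of_dvd (Nat.pos_of_ne_zero hn0) hdvd) (by omega)))
    have hx_n : x ^ (n : ℤ) ∈ S := by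
      have hrw : x ^ (n : ℤ) = x ^ γ * (x ^ ((p : ℤ) * (γ / p)))⁻¹ := by
        rw [← zpow_sub]
        congr 1
        rw [← hγmod, Int.emod_def]
      rw [hrw]
      refine S.mul_mem hγ (S.inv_mem ?_)
      rw [zpow_mul, zpow_natCast, hxp, one_zpow]
      exact S.one_mem
    have hbez := Nat.gcd_eq_gcd_ab n p
    rw [hcop, Nat.cast_one] at hbez
    have hxx : x = (x ^ (n : ℤ)) ^ (Nat.gcdA n p) * (x ^ (p : ℤ)) ^ (Nat.gcdB n p) := by
      rw [← zpow_mul, ← zpow_mul, ← zpow_add, ← hbez, zpow_one]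
    rw [hxx]
    refine S.mul_mem (S.zpow_mem hx_n _) ?_
    rw [zpow_natCast, hxp, one_zpow]
    exact S.one_mem
  -- socle independence
  have hup : (u ^ r) ^ p = 1 := by rw [← pow_mul, hrp, expV]
  have hvp : (v ^ r) ^ p = 1 := by rw [← pow_mul, hrp, expV]
  have hwp : (w ^ r) ^ p = 1 := by rw [← pow_mul, hrp, expV]
  have hppow : ∀ (x : G ⧸ Subgroup.center G) (γ : ℤ), x ^ p = 1 → (p : ℤ) ∣ γ → x ^ γ = 1 := by
    intro x γ hxp hdvd
    obtain ⟨γ', rfl⟩ := hdvd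
    rw [zpow_mul, zpow_natCast, hxp, one_zpow]
  have hsoc : ∀ α β γ : ℤ, (u ^ r) ^ α * (v ^ r) ^ β * (w ^ r) ^ γ = 1 →
      (p : ℤ) ∣ α ∧ (p : ℤ) ∣ β ∧ (p : ℤ) ∣ γ := by
    intro α β γ h
    have hγ : (p : ℤ) ∣ γ := by
      by_contra hnd
      refine hs3 (key _ _ γ hwp ?_ hnd)
      have hCeq : (w ^ r) ^ γ = ((u ^ r) ^ α * (v ^ r) ^ β)⁻¹ :=
        eq_inv_of_mul_eq_one_right h
      rw [hCeq]
      refine Subgroup.inv_mem _ (Subgroup.mul_mem _ ?_ ?_)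
      · exact Subgroup.zpow_mem _ (Subgroup.subset_closure (by simp)) α
      · exact Subgroup.zpow_mem _ (Subgroup.subset_closure (by simp)) β
    have h' : (u ^ r) ^ α * (v ^ r) ^ β = 1 := by
      rw [hppow _ _ hwp hγ, mul_one] at h
      exact h
    have hβ : (p : ℤ) ∣ β := by
      by_contra hnd
      refine hs2 (key _ _ β hvp ?_ hnd)
      have hCeq : (v ^ r) ^ β = ((u ^ r) ^ α)⁻¹ := eq_inv_of_mul_eq_one_right h'
      rw [hCeq]
      exact Subgroup.inv_mem _ (Subgroup.zpow_mem _ (Subgroup.mem_zpowers _) α)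
    have h'' : (u ^ r) ^ α = 1 := by
      rw [hppow _ _ hvp hβ, mul_one] at h'
      exact h'
    have hα : (p : ℤ) ∣ α := by
      by_contra hnd
      refine hs1 ?_
      have := key (u ^ r) ⊥ α hup (by rw [h'']; exact Subgroup.one_mem _) hnd
      exact Subgroup.mem_bot.mp this
    exact ⟨hα, hβ, hγ⟩
  -- full independence
  have haux : ∀ j : ℕ, j ≤ m → ∀ α β γ : ℤ, u ^ α * v ^ β * w ^ γ = 1 →
      ((p ^ j : ℕ) : ℤ) ∣ α ∧ ((p ^ j : ℕ) : ℤ) ∣ β ∧ ((p ^ j : ℕ) : ℤ) ∣ γ := by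
    intro j
    induction j with
    | zero => intro _ α β γ _; simp
    | succ j ih =>
      intro hj α β γ h
      obtain ⟨hα, hβ, hγ⟩ := ih (by omega) α β γ h
      obtain ⟨α', rfl⟩ := hα
      obtain ⟨β', rfl⟩ := hβ
      obtain ⟨γ', rfl⟩ := hγ
      have hs : (u ^ α' * v ^ β' * w ^ γ') ^ ((p ^ j : ℕ) : ℤ) = 1 := by
        rw [(hcm _ _).mul_zpow, (hcm _ _).mul_zpow, ← zpow_mul, ← zpow_mul, ← zpow_mul,
          mul_comm α' _, mul_comm β' _, mul_comm γ' _]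
        exact h
      have hsr : (u ^ α' * v ^ β' * w ^ γ') ^ ((r : ℕ) : ℤ) = 1 := by
        have hcast : ((r : ℕ) : ℤ) = ((p ^ j : ℕ) : ℤ) * ((p ^ (m - 1 - j) : ℕ) : ℤ) := by
          have hnat : r = p ^ j * p ^ (m - 1 - j) := by
            rw [hrdef, ← pow_add]
            congr 1
            omega
          rw [hnat]
          push_cast
          ring
        rw [hcast, zpow_mul, hs, one_zpow]
      have hswz : ∀ (x : G ⧸ Subgroup.center G) (a : ℤ), (x ^ a) ^ ((r : ℕ) : ℤ) = (x ^ r) ^ a := by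
        intro x a
        rw [← zpow_mul, mul_comm, zpow_mul, zpow_natCast]
      rw [(hcm _ _).mul_zpow, (hcm _ _).mul_zpow, hswz, hswz, hswz] at hsr
      obtain ⟨h1, h2', h3⟩ := hsoc α' β' γ' hsr
      obtain ⟨a2, rfl⟩ := h1
      obtain ⟨b2, rfl⟩ := h2'
      obtain ⟨c2, rfl⟩ := h3
      refine ⟨⟨a2, by push_cast; ring⟩, ⟨b2, by push_cast; ring⟩, ⟨c2, by push_cast; ring⟩⟩
  have hfull : ∀ α β γ : ℤ, u ^ α * v ^ β * w ^ γ = 1 →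
      ((p ^ m : ℕ) : ℤ) ∣ α ∧ ((p ^ m : ℕ) : ℤ) ∣ β ∧ ((p ^ m : ℕ) : ℤ) ∣ γ :=
    haux m le_rfl
  letI commV : CommGroup (G ⧸ Subgroup.center G) :=
    { (inferInstance : Group (G ⧸ Subgroup.center G)) with
      mul_comm := fun x y => (hcm x y).eq }
  exact step3 p m hp hm expV u v w hfull
end

section
/- Let G be a finite group and suppose every automorphism of G is class preserving (Aut(G) = Aut_c(G)) and Aut(G) is an elementary abelian p-group. Then G/Z(G) is elementary abelian and Z(G) = γ₂(G) ≤ Φ(G); in particular, if additionally G is a purely non-abelian p-group with Z(G) = γ₂(G), then G is a special p-group (Z(G) = γ₂(G) = Φ(G)). -/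
open scoped Pointwise
open scoped commutatorElement

lemma zmod_exists_smul_eq {N d : ℕ} (hd : d ∣ N) (hN : 0 < N) (u : ZMod N)
    (hu : (N / d) • u = 0) : ∃ y : ZMod N, d • y = u := by
  haveI : NeZero N := ⟨hN.ne'⟩
  obtain ⟨e, rfl⟩ := hd
  have hd0 : 0 < d := Nat.pos_of_mul_pos_left (by rwa [mul_comm] at hN)
  have he0 : 0 < e := Nat.pos_of_mul_pos_left hN
  have hdiv : (d * e) / d = e := Nat.mul_div_cancel_left _ hd0
  rw [hdiv] at hu
  have : ((e * u.val : ℕ) : ZMod (d * e)) = 0 := by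
    push_cast
    rw [ZMod.natCast_zmod_val]
    rw [nsmul_eq_mul] at hu
    exact_mod_cast hu
  rw [ZMod.natCast_eq_zero_iff] at this
  have hdvd : d ∣ u.val := by
    obtain ⟨t, ht⟩ := this
    refine ⟨t, Nat.eq_of_mul_eq_mul_left he0 (m := u.val) (k := d * t) ?_⟩
    rw [ht]; ring
  refine ⟨((u.val / d : ℕ) : ZMod (d * e)), ?_⟩
  rw [nsmul_eq_mul]
  rw [show ((d : ZMod (d*e)) * ((u.val / d : ℕ) : ZMod (d*e))) = ((d * (u.val / d) : ℕ) : ZMod (d*e)) by push_cast; ring]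
  rw [Nat.mul_div_cancel' hdvd, ZMod.natCast_zmod_val]

lemma char_extend_step {A : Type*} [AddCommGroup A] {N : ℕ} (hN : 0 < N)
    (hA : ∀ x : A, N • x = 0) (S : AddSubgroup A) (χ : S →+ ZMod N)
    (x : A) (hx : x ∉ S) :
    ∃ S' : AddSubgroup A, S < S' ∧ ∃ χ' : S' →+ ZMod N,
      ∀ (a : A) (ha : a ∈ S) (ha' : a ∈ S'), χ' ⟨a, ha'⟩ = χ ⟨a, ha⟩ := by
  haveI : NeZero N := ⟨hN.ne'⟩
  set d := addOrderOf (QuotientAddGroup.mk x : A ⧸ S) with hd_def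
  have hdN : d ∣ N := addOrderOf_dvd_of_nsmul_eq_zero (by
    rw [← QuotientAddGroup.mk_nsmul, hA x, QuotientAddGroup.mk_zero])
  have hkey : ∀ m : ℤ, m • x ∈ S ↔ (d : ℤ) ∣ m := by
    intro m
    rw [← QuotientAddGroup.eq_zero_iff, QuotientAddGroup.mk_zsmul,
      ← addOrderOf_dvd_iff_zsmul_eq_zero]
  have hdx : d • x ∈ S := by
    have := (hkey d).mpr dvd_rfl
    simpa using this
  set u := χ ⟨d • x, hdx⟩ with hu_def
  have hu : (N / d) • u = 0 := by
    rw [hu_def, ← map_nsmul]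
    have : (N / d) • (⟨d • x, hdx⟩ : S) = 0 := by
      apply Subtype.ext
      push_cast [AddSubgroup.coe_nsmul]
      rw [smul_smul, Nat.div_mul_cancel hdN, hA x]
    rw [this, map_zero]
  obtain ⟨y, hy⟩ := zmod_exists_smul_eq hdN hN u hu
  set π : ℤ × S →+ A := (zmultiplesHom A x).coprod S.subtype with hπ
  set ψ : ℤ × S →+ ZMod N := (zmultiplesHom (ZMod N) y).coprod χ with hψ
  have hπ_apply : ∀ q : ℤ × S, π q = q.1 • x + (q.2 : A) := fun q => rfl
  have hψ_apply : ∀ q : ℤ × S, ψ q = q.1 • y + χ q.2 := fun q => rfl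
  have hker : ∀ q ∈ π.ker, ψ q = 0 := by
    rintro ⟨m, s⟩ hq
    have hq' : m • x + (s : A) = 0 := hq
    have hms : m • x = -(s : A) := by linear_combination (norm := abel_nf) hq'
    have hdm : (d : ℤ) ∣ m := (hkey m).mp (by rw [hms]; exact S.neg_mem s.2)
    obtain ⟨t, rfl⟩ := hdm
    have h1 : ((d : ℤ) * t) • y = t • u := by
      rw [mul_comm, mul_smul, ← hy]
      norm_cast
    have h2 : t • (⟨d • x, hdx⟩ : S) = -s := by
      apply Subtype.ext
      push_cast
      rw [← hms, mul_comm, mul_smul]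
      simp [natCast_zsmul]
    rw [hψ_apply]
    dsimp only
    rw [h1, hu_def, ← map_zsmul, h2, map_neg, neg_add_cancel]
  set χ'₀ : (ℤ × S) ⧸ π.ker →+ ZMod N :=
    QuotientAddGroup.lift π.ker ψ hker with hχ'₀
  set e := QuotientAddGroup.quotientKerEquivRange π with he
  refine ⟨π.range, ?_, χ'₀.comp e.symm.toAddMonoidHom, ?_⟩
  · constructor
    · intro s hs
      exact ⟨(0, ⟨s, hs⟩), by simp [hπ_apply]⟩
    · intro hle
      exact hx (hle ⟨(1, 0), by simp [hπ_apply]⟩)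
  · intro a ha ha'
    obtain ⟨q, hq⟩ : ∃ q : ℤ × S, π q = a ∧ ψ q = χ ⟨a, ha⟩ := by
      refine ⟨(0, ⟨a, ha⟩), by simp [hπ_apply], by simp [hψ_apply]⟩
    obtain ⟨hq1, hq2⟩ := hq
    have : e.symm ⟨a, ha'⟩ = QuotientAddGroup.mk q := by
      apply e.injective
      rw [AddEquiv.apply_symm_apply]
      apply Subtype.ext
      show _ = π q
      rw [hq1]
    show χ'₀ (e.symm ⟨a, ha'⟩) = _
    rw [this, ← hq2]
    rfl

lemma exists_char {A : Type*} [AddCommGroup A] [Finite A] {N : ℕ} (hN : 0 < N)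
    (hA : ∀ x : A, N • x = 0) (a : A) (ha : addOrderOf a = N) :
    ∃ χ : A →+ ZMod N, χ a = 1 := by
  haveI : NeZero N := ⟨hN.ne'⟩
  haveI : Finite (AddSubgroup A) :=
    Finite.of_injective (fun S => (S : Set A)) SetLike.coe_injective
  -- base character on the cyclic subgroup generated by a
  set π₀ : ℤ →+ A := zmultiplesHom A a with hπ₀
  set ψ₀ : ℤ →+ ZMod N := Int.castAddHom (ZMod N) with hψ₀
  have hker₀ : ∀ m ∈ π₀.ker, ψ₀ m = 0 := by
    intro m hm
    have : m • a = 0 := hm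
    rw [← addOrderOf_dvd_iff_zsmul_eq_zero, ha] at this
    simpa [hψ₀, ZMod.intCast_zmod_eq_zero_iff_dvd] using this
  set χb : (ℤ ⧸ π₀.ker) →+ ZMod N := QuotientAddGroup.lift π₀.ker ψ₀ hker₀ with hχb
  set e₀ := QuotientAddGroup.quotientKerEquivRange π₀ with he₀
  set χ₀ : π₀.range →+ ZMod N := χb.comp e₀.symm.toAddMonoidHom with hχ₀
  have haS : a ∈ π₀.range := ⟨1, one_zsmul a⟩
  have hχ₀a : ∀ h : a ∈ π₀.range, χ₀ ⟨a, h⟩ = 1 := by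
    intro h
    have h1 : e₀.symm ⟨a, h⟩ = QuotientAddGroup.mk 1 := by
      apply e₀.injective
      rw [AddEquiv.apply_symm_apply]
      apply Subtype.ext
      show a = π₀ 1
      simp [hπ₀]
    show χb (e₀.symm ⟨a, h⟩) = 1
    rw [h1]
    show ψ₀ 1 = 1
    simp [hψ₀]
  -- the set of subgroups containing a with a good character
  set T : Set (AddSubgroup A) :=
    {S | a ∈ S ∧ ∃ χ : S →+ ZMod N, ∀ h : a ∈ S, χ ⟨a, h⟩ = 1} with hT
  have hT0 : π₀.range ∈ T := ⟨haS, χ₀, hχ₀a⟩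
  obtain ⟨S, hST, hSmax⟩ := Set.Finite.exists_maximalFor id T T.toFinite ⟨_, hT0⟩
  obtain ⟨haSmem, χ, hχa⟩ := hST
  by_cases hStop : S = ⊤
  · subst hStop
    refine ⟨χ.comp (AddSubgroup.topEquiv.symm.toAddMonoidHom), ?_⟩
    have : (AddSubgroup.topEquiv.symm a : (⊤ : AddSubgroup A)) = ⟨a, trivial⟩ := rfl
    show χ (AddSubgroup.topEquiv.symm a) = 1
    rw [this]
    exact hχa _
  · exfalso
    obtain ⟨x, hx⟩ : ∃ x : A, x ∉ S := by
      by_contra h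
      push_neg at h
      exact hStop (AddSubgroup.eq_top_iff' S |>.mpr h)
    obtain ⟨S', hlt, χ', hext⟩ := char_extend_step hN hA S χ x hx
    have hS'T : S' ∈ T := by
      refine ⟨hlt.le haSmem, χ', fun h => ?_⟩
      rw [hext a haSmem h]
      exact hχa _
    have := hSmax hS'T hlt.le
    simp only [id] at this
    exact hlt.not_ge this

lemma pow_mod_helper {G : Type*} [Group G] {w : G} {N : ℕ} (hw : w ^ N = 1) (m : ℕ) :
    w ^ (m % N) = w ^ m := by
  conv_rhs => rw [← Nat.div_add_mod m N]
  rw [pow_add, pow_mul, hw, one_pow, one_mul]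

lemma mk_aut {G : Type*} [Group G] [Finite G] (f : G → G)
    (hmul : ∀ x y : G, f (x * y) = f x * f y)
    (hcent : ∀ x z : G, f x * z = z * f x)
    (hinj : ∀ x : G, x * f x = 1 → x = 1) :
    ∃ φ : MulAut G, ∀ x, φ x = x * f x := by
  have hf1 : f 1 = 1 := by
    have h := hmul 1 1
    rw [mul_one] at h
    exact left_eq_mul.mp h
  set φ₀ : G →* G :=
    { toFun := fun x => x * f x
      map_one' := by simp [hf1]
      map_mul' := by
        intro x y
        rw [hmul]
        have h1 : f x * y = y * f x := hcent x y
        rw [show x * y * (f x * f y) = x * (y * f x) * f y by simp [mul_assoc], ← h1]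
        simp [mul_assoc]
    } with hφ₀
  have hinj' : Function.Injective φ₀ := by
    rw [injective_iff_map_eq_one]
    intro a ha
    exact hinj a ha
  have hbij : Function.Bijective φ₀ := (Finite.injective_iff_bijective).mp hinj'
  exact ⟨MulEquiv.ofBijective φ₀ hbij, fun x => rfl⟩

lemma conj_payoff {G : Type*} [Group G] {x c : G} (h : IsConj x (x * c)) :
    c ∈ commutator G := by
  rw [isConj_iff] at h
  obtain ⟨g, hg⟩ := h
  have h2 : c = x⁻¹ * (g * x * g⁻¹) := by rw [hg]; group
  have h3 : c = ⁅x⁻¹, g⁆ := by rw [h2, commutatorElement_def, inv_inv]; group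
  rw [h3, commutator_def]
  exact Subgroup.commutator_mem_commutator (Subgroup.mem_top _) (Subgroup.mem_top _)

lemma central_payoff {G : Type*} [Group G] {z y : G} (hz : z ∈ Subgroup.center G)
    (h : IsConj z y) : y = z := by
  rw [isConj_iff] at h
  obtain ⟨g, hg⟩ := h
  rw [← hg, Subgroup.mem_center_iff.mp hz g]
  group

lemma coatom_of_index_prime {G : Type*} [Group G] {p : ℕ} (hp : p.Prime)
    {K : Subgroup G} (h : K.index = p) : IsCoatom K := by
  constructor
  · intro htop
    rw [htop, Subgroup.index_top] at h
    exact hp.one_lt.ne h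
  · intro J hJ
    have hdvd : J.index ∣ p := h ▸ Subgroup.index_dvd_of_le hJ.le
    rcases (Nat.Prime.eq_one_or_self_of_dvd hp _ hdvd) with h1 | hp'
    · exact Subgroup.index_eq_one.mp h1
    · exfalso
      have hrel := Subgroup.relIndex_mul_index hJ.le
      rw [hp', h] at hrel
      have : K.relIndex J = 1 := by
        refine Nat.eq_of_mul_eq_mul_right hp.pos ?_
        rw [hrel, one_mul]
      exact hJ.not_ge (Subgroup.relIndex_eq_one.mp this)

/-- Let G be a finite non-abelian p-group all of whose automorphisms are class
preserving, with Aut(G) an elementary abelian p-group. Then G/Z(G) is elementary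
abelian and Z(G) = γ₂(G) ≤ Φ(G); in particular, if additionally G is purely
non-abelian (with Z(G) = γ₂(G)), then G is a special p-group: Z(G) = γ₂(G) = Φ(G). -/
theorem stmt_17 (p : ℕ) (hp : p.Prime) (G : Type*) [Group G] [Finite G]
    (hG : IsPGroup p G) (hna : ∃ a b : G, a * b ≠ b * a)
    (hclass : ∀ (φ : MulAut G) (x : G), IsConj x (φ x))
    (habel : ∀ φ ψ : MulAut G, Commute φ ψ)
    (hexp : ∀ φ : MulAut G, φ ^ p = 1) :
    (∀ q : G ⧸ Subgroup.center G, q ^ p = 1) ∧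
      commutator G ≤ Subgroup.center G ∧
      Subgroup.center G = commutator G ∧
      Subgroup.center G ≤ frattini G ∧
      ((¬∃ H K : Subgroup G, H.Normal ∧ K.Normal ∧ K ≠ ⊥ ∧
          (∀ a ∈ K, ∀ b ∈ K, Commute a b) ∧ H ⊓ K = ⊥ ∧ H ⊔ K = ⊤) →
        Subgroup.center G = frattini G ∧ commutator G = frattini G) := by
  haveI : Fact p.Prime := ⟨hp⟩
  -- Step 1: p-th powers are central
  have hpZ : ∀ g : G, g ^ p ∈ Subgroup.center G := by
    intro g
    have h1 : MulAut.conj (g ^ p) = 1 := by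
      rw [map_pow]
      exact hexp (MulAut.conj g)
    rw [Subgroup.mem_center_iff]
    intro h
    have h2 := congrArg (fun ψ : MulAut G => ψ h) h1
    simp only [MulAut.conj_apply, MulAut.one_apply] at h2
    calc h * g ^ p = (g ^ p * h * (g ^ p)⁻¹) * g ^ p := by rw [h2]
    _ = g ^ p * h := by group
  -- Goal 1
  have hVexp : ∀ q : G ⧸ Subgroup.center G, q ^ p = 1 := by
    intro q
    induction q using QuotientGroup.induction_on with
    | H g =>
      rw [← QuotientGroup.mk_pow, QuotientGroup.eq_one_iff]
      exact hpZ g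
  -- Goal 2: commutators are central
  have hCZ : commutator G ≤ Subgroup.center G := by
    rw [commutator_def, Subgroup.commutator_le]
    intro g _ h _
    rw [Subgroup.mem_center_iff]
    intro y
    have hc := habel (MulAut.conj g) (MulAut.conj h)
    have hc' : MulAut.conj (g * h) = MulAut.conj (h * g) := by
      rw [map_mul, map_mul]; exact hc
    have hE := congrArg (fun ψ : MulAut G => ψ (h⁻¹ * g⁻¹ * y * g * h)) hc'
    simp only [MulAut.conj_apply] at hE
    calc y * ⁅g, h⁆ = ⁅g, h⁆ * ((h * g) * (h⁻¹ * g⁻¹ * y * g * h) * (h * g)⁻¹) := by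
          rw [commutatorElement_def]; group
    _ = ⁅g, h⁆ * ((g * h) * (h⁻¹ * g⁻¹ * y * g * h) * (g * h)⁻¹) := by rw [← hE]
    _ = ⁅g, h⁆ * y := by rw [commutatorElement_def]; group
  -- commutator subgroup has exponent p
  have hCexp : ∀ c ∈ commutator G, c ^ p = 1 := by
    have hle : commutator G ≤
        { carrier := {g : G | g ∈ Subgroup.center G ∧ g ^ p = 1}
          one_mem' := ⟨Subgroup.one_mem _, one_pow p⟩
          mul_mem' := by
            rintro a b ⟨haZ, hap⟩ ⟨hbZ, hbp⟩
            refine ⟨Subgroup.mul_mem _ haZ hbZ, ?_⟩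
            have hab : Commute a b := Subgroup.mem_center_iff.mp hbZ a
            rw [hab.mul_pow, hap, hbp, one_mul]
          inv_mem' := by
            rintro a ⟨haZ, hap⟩
            exact ⟨Subgroup.inv_mem _ haZ, by rw [inv_pow, hap, inv_one]⟩ } := by
      rw [commutator_def, Subgroup.commutator_le]
      intro g _ h _
      have hgh : ⁅g, h⁆ ∈ Subgroup.center G := by
        apply hCZ
        rw [commutator_def]
        exact Subgroup.commutator_mem_commutator (Subgroup.mem_top _) (Subgroup.mem_top _)
      refine ⟨hgh, ?_⟩
      have key : ∀ n : ℕ, g ^ n * h * (g ^ n)⁻¹ * h⁻¹ = ⁅g, h⁆ ^ n := by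
        intro n
        induction n with
        | zero => simp
        | succ n ih =>
          have hcn : ⁅g, h⁆ ^ n ∈ Subgroup.center G := Subgroup.pow_mem _ hgh n
          have hcomm : ∀ y : G, y * ⁅g, h⁆ ^ n = ⁅g, h⁆ ^ n * y :=
            Subgroup.mem_center_iff.mp hcn
          calc g ^ (n+1) * h * (g ^ (n+1))⁻¹ * h⁻¹
              = g * (g ^ n * h * (g ^ n)⁻¹ * h⁻¹) * (h * g⁻¹ * h⁻¹) := by group
            _ = g * ⁅g, h⁆ ^ n * (h * g⁻¹ * h⁻¹) := by rw [ih]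
            _ = ⁅g, h⁆ ^ n * (g * h * g⁻¹ * h⁻¹) := by rw [hcomm g]; group
            _ = ⁅g, h⁆ ^ n * ⁅g, h⁆ := by rw [commutatorElement_def]
            _ = ⁅g, h⁆ ^ (n + 1) := (pow_succ _ n).symm
      calc ⁅g, h⁆ ^ p = g ^ p * h * (g ^ p)⁻¹ * h⁻¹ := (key p).symm
        _ = h * g ^ p * (g ^ p)⁻¹ * h⁻¹ := by
            rw [← Subgroup.mem_center_iff.mp (hpZ g) h]
        _ = 1 := by group
    intro c hc
    exact (hle hc).2
  -- the quotient by the commutator subgroup is a commutative group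
  letI instQC : CommGroup (G ⧸ commutator G) :=
    { (inferInstance : Group (G ⧸ commutator G)) with
      mul_comm := by
        intro q r
        induction q using QuotientGroup.induction_on with
        | H x =>
        induction r using QuotientGroup.induction_on with
        | H y =>
        rw [← QuotientGroup.mk_mul, ← QuotientGroup.mk_mul, QuotientGroup.eq]
        have hxy : (x * y)⁻¹ * (y * x) = ⁅y⁻¹, x⁻¹⁆ := by
          rw [commutatorElement_def]; group
        rw [hxy, commutator_def]
        exact Subgroup.commutator_mem_commutator (Subgroup.mem_top _) (Subgroup.mem_top _) }
  -- Claim A: the quotient by the commutator subgroup has exponent p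
  have hQp : ∀ q : G ⧸ commutator G, q ^ p = 1 := by
    by_contra hcon
    push_neg at hcon
    obtain ⟨q₀, hq₀⟩ := hcon
    have hEE : Monoid.ExponentExists (G ⧸ commutator G) := Monoid.ExponentExists.of_finite
    obtain ⟨b, hb⟩ := Monoid.exists_orderOf_eq_exponent hEE
    set N := Monoid.exponent (G ⧸ commutator G) with hNdef
    have hNpos : 0 < N := Nat.pos_of_ne_zero Monoid.exponent_ne_zero_of_finite
    obtain ⟨m, hm⟩ := IsPGroup.iff_card.mp (hG.to_quotient (commutator G))
    obtain ⟨k, hkm, hk⟩ := (Nat.dvd_prime_pow hp).mp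
      (hm ▸ Group.exponent_dvd_nat_card (G := G ⧸ commutator G))
    rw [← hNdef] at hk
    have hk2 : 2 ≤ k := by
      by_contra hk2
      push_neg at hk2
      have hdvd : N ∣ p := by
        rw [hk]
        calc p ^ k ∣ p ^ 1 := pow_dvd_pow p (by omega)
        _ = p := pow_one p
      exact hq₀ (orderOf_dvd_iff_pow_eq_one.mp ((Monoid.order_dvd_exponent q₀).trans hdvd))
    haveI : NeZero N := ⟨hNpos.ne'⟩
    haveI : Fact (1 < N) := ⟨by
      rw [hk]
      exact Nat.one_lt_pow (by omega) hp.one_lt⟩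
    obtain ⟨a, rfl⟩ := QuotientGroup.mk_surjective b
    have hAexp : ∀ x : Additive (G ⧸ commutator G), N • x = 0 := by
      intro x
      show N • Additive.ofMul (Additive.toMul x) = 0
      rw [← ofMul_pow, Monoid.pow_exponent_eq_one]
      rfl
    obtain ⟨χ, hχb⟩ := exists_char hNpos hAexp (Additive.ofMul (QuotientGroup.mk a))
      (by rw [addOrderOf_ofMul_eq_orderOf]; exact hb)
    set n : G → ℕ :=
      fun x => (χ (Additive.ofMul (QuotientGroup.mk x : G ⧸ commutator G))).val with hn
    set w : G := a ^ p ^ (k - 1) with hw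
    have hwZ : w ∈ Subgroup.center G := by
      have : w = (a ^ p) ^ p ^ (k - 2) := by
        rw [hw, ← pow_mul]
        congr 1
        rw [← pow_succ']
        congr 1
        omega
      rw [this]
      exact Subgroup.pow_mem _ (hpZ a) _
    have hCmem : ∀ x : G, x ^ p ^ k ∈ commutator G := by
      intro x
      have : ((x ^ p ^ k : G) : G ⧸ commutator G) = 1 := by
        rw [QuotientGroup.mk_pow, ← hk, Monoid.pow_exponent_eq_one]
      exact (QuotientGroup.eq_one_iff _).mp this
    have hGexp : ∀ x : G, x ^ p ^ (k + 1) = 1 := by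
      intro x
      rw [pow_succ, pow_mul]
      exact hCexp _ (hCmem x)
    have hwN : w ^ N = 1 := by
      rw [hw, ← pow_mul, hk, ← pow_add]
      have : k - 1 + k = (k + 1) + (k - 2) := by omega
      rw [this, pow_add, pow_mul]
      rw [hGexp a, one_pow]
    have hmkw : (w : G ⧸ commutator G) = (QuotientGroup.mk a) ^ p ^ (k - 1) := by
      rw [hw, QuotientGroup.mk_pow]
    have hχw : χ (Additive.ofMul (w : G ⧸ commutator G)) = (p ^ (k - 1) : ZMod N) := by
      rw [hmkw, ofMul_pow, map_nsmul, hχb, nsmul_eq_mul, mul_one]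
      push_cast
      rfl
    have hχval : ∀ x : G,
        χ (Additive.ofMul (QuotientGroup.mk x : G ⧸ commutator G)) = (n x : ZMod N) := by
      intro x
      rw [hn]
      rw [ZMod.natCast_zmod_val]
    set f : G → G := fun x => w ^ n x with hf
    have hmul : ∀ x y : G, f (x * y) = f x * f y := by
      intro x y
      show w ^ n (x * y) = w ^ n x * w ^ n y
      have : n (x * y) = (n x + n y) % N := by
        rw [hn]
        show (χ (Additive.ofMul (QuotientGroup.mk (x * y) : G ⧸ commutator G))).val = _
        rw [show (QuotientGroup.mk (x * y) : G ⧸ commutator G)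
            = QuotientGroup.mk x * QuotientGroup.mk y from rfl]
        rw [ofMul_mul, map_add, ZMod.val_add]
      rw [this, pow_mod_helper hwN, pow_add]
    have hcent : ∀ x z : G, f x * z = z * f x := by
      intro x z
      exact (Subgroup.mem_center_iff.mp (Subgroup.pow_mem _ hwZ (n x)) z).symm
    have hinj : ∀ x : G, x * f x = 1 → x = 1 := by
      intro x hx
      have hxw : (QuotientGroup.mk x : G ⧸ commutator G) * ((w : G ⧸ commutator G)) ^ n x = 1 := by
        rw [← QuotientGroup.mk_pow, ← QuotientGroup.mk_mul, hx, QuotientGroup.mk_one]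
      have hadd : χ (Additive.ofMul (QuotientGroup.mk x : G ⧸ commutator G))
          + n x • χ (Additive.ofMul (w : G ⧸ commutator G)) = 0 := by
        rw [← map_nsmul, ← map_add, ← ofMul_pow, ← ofMul_mul, hxw]
        simp
      rw [hχval, hχw] at hadd
      have hzero : (n x : ZMod N) * (1 + (p ^ (k - 1) : ZMod N)) = 0 := by
        rw [nsmul_eq_mul] at hadd
        push_cast at hadd ⊢
        ring_nf
        ring_nf at hadd
        linear_combination hadd
      have hunit : IsUnit (1 + (p ^ (k - 1) : ZMod N)) := by
        have hcop : Nat.Coprime (1 + p ^ (k - 1)) p := by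
          rw [Nat.coprime_comm]
          rw [hp.coprime_iff_not_dvd]
          intro hdvd
          have h1 : p ∣ p ^ (k - 1) := dvd_pow_self p (by omega)
          have : p ∣ 1 := (Nat.dvd_add_right h1).mp (by rwa [Nat.add_comm] at hdvd)
          exact hp.one_lt.ne' (Nat.dvd_one.mp this)
        have : IsUnit ((1 + p ^ (k - 1) : ℕ) : ZMod N) := by
          rw [ZMod.isUnit_iff_coprime, hk]
          exact Nat.Coprime.pow_right k hcop
        rwa [Nat.cast_add, Nat.cast_one, Nat.cast_pow] at this
      have hn0 : (n x : ZMod N) = 0 := hunit.mul_left_eq_zero.mp hzero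
      have : N ∣ n x := (ZMod.natCast_eq_zero_iff _ _).mp hn0
      have hnx0 : n x = 0 := Nat.eq_zero_of_dvd_of_lt this (ZMod.val_lt _)
      have : f x = 1 := by rw [hf]; show w ^ n x = 1; rw [hnx0, pow_zero]
      rw [this, mul_one] at hx
      exact hx
    obtain ⟨φ, hφ⟩ := mk_aut f hmul hcent hinj
    have hconj := hclass φ a
    rw [hφ] at hconj
    have hfa : f a = w := by
      show w ^ n a = w
      have : n a = 1 := by
        rw [hn]
        show (χ (Additive.ofMul (QuotientGroup.mk a : G ⧸ commutator G))).val = 1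
        rw [hχb, ZMod.val_one]
      rw [this, pow_one]
    rw [hfa] at hconj
    have hwC : w ∈ commutator G := conj_payoff hconj
    have : ((w : G) : G ⧸ commutator G) = 1 := (QuotientGroup.eq_one_iff _).mpr hwC
    rw [hmkw] at this
    have hdvd : N ∣ p ^ (k - 1) := by
      rw [← hb]
      exact orderOf_dvd_of_pow_eq_one this
    rw [hk] at hdvd
    have := (Nat.pow_dvd_pow_iff_le_right hp.one_lt).mp hdvd
    omega
  -- p-th powers lie in the commutator subgroup
  have hA : ∀ x : G, x ^ p ∈ commutator G := by
    intro x
    have h := hQp (QuotientGroup.mk x)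
    rwa [← QuotientGroup.mk_pow, QuotientGroup.eq_one_iff] at h
  haveI : NeZero p := ⟨hp.pos.ne'⟩
  haveI : Fact (1 < p) := ⟨hp.one_lt⟩
  have hAexpP : ∀ x : Additive (G ⧸ commutator G), p • x = 0 := by
    intro x
    show p • Additive.ofMul (Additive.toMul x) = 0
    rw [← ofMul_pow, hQp]
    rfl
  -- the center has exponent p
  have hZexp : ∀ z ∈ Subgroup.center G, z ^ p = 1 := by
    intro z hz
    by_contra hzp
    set w : G := z ^ p with hw
    have hwC : w ∈ commutator G := hA z
    have hwp : w ^ p = 1 := hCexp _ hwC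
    have hzC : z ∉ commutator G := fun h => hzp (hCexp _ h)
    have hzQ : ((z : G ⧸ commutator G)) ≠ 1 := fun h =>
      hzC ((QuotientGroup.eq_one_iff _).mp h)
    have hordz : orderOf (z : G ⧸ commutator G) = p := by
      have h1 : (z : G ⧸ commutator G) ^ p = 1 := hQp _
      rcases hp.eq_one_or_self_of_dvd _ (orderOf_dvd_of_pow_eq_one h1) with h | h
      · exact absurd (orderOf_eq_one_iff.mp h) hzQ
      · exact h
    obtain ⟨χ, hχz⟩ := exists_char hp.pos hAexpP (Additive.ofMul (z : G ⧸ commutator G))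
      (by rw [addOrderOf_ofMul_eq_orderOf]; exact hordz)
    set n : G → ℕ :=
      fun x => (χ (Additive.ofMul (QuotientGroup.mk x : G ⧸ commutator G))).val with hn
    set f : G → G := fun x => w ^ n x with hf
    have hwZ : w ∈ Subgroup.center G := Subgroup.pow_mem _ hz p
    have hmul : ∀ x y : G, f (x * y) = f x * f y := by
      intro x y
      show w ^ n (x * y) = w ^ n x * w ^ n y
      have h2 : n (x * y) = (n x + n y) % p := by
        rw [hn]
        show (χ (Additive.ofMul (QuotientGroup.mk (x * y) : G ⧸ commutator G))).val = _
        rw [show (QuotientGroup.mk (x * y) : G ⧸ commutator G)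
            = QuotientGroup.mk x * QuotientGroup.mk y from rfl]
        rw [ofMul_mul, map_add, ZMod.val_add]
      rw [h2, pow_mod_helper hwp, pow_add]
    have hcent : ∀ x y : G, f x * y = y * f x := fun x y =>
      (Subgroup.mem_center_iff.mp (Subgroup.pow_mem _ hwZ (n x)) y).symm
    have hinj : ∀ x : G, x * f x = 1 → x = 1 := by
      intro x hx
      have hxeq : x = (w ^ n x)⁻¹ := eq_inv_of_mul_eq_one_left hx
      have hxC : x ∈ commutator G := by
        rw [hxeq]
        exact Subgroup.inv_mem _ (Subgroup.pow_mem _ hwC _)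
      have hx0 : (QuotientGroup.mk x : G ⧸ commutator G) = 1 :=
        (QuotientGroup.eq_one_iff _).mpr hxC
      have hnx : n x = 0 := by
        rw [hn]
        show (χ (Additive.ofMul (QuotientGroup.mk x : G ⧸ commutator G))).val = 0
        rw [hx0]
        simp
      rw [hxeq, hnx, pow_zero, inv_one]
    obtain ⟨φ, hφ⟩ := mk_aut f hmul hcent hinj
    have hconj := hclass φ z
    rw [hφ] at hconj
    have hfz : f z = w := by
      show w ^ n z = w
      have hnz : n z = 1 := by
        rw [hn]
        show (χ (Additive.ofMul (QuotientGroup.mk z : G ⧸ commutator G))).val = 1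
        rw [hχz, ZMod.val_one]
      rw [hnz, pow_one]
    rw [hfz] at hconj
    have hzw := central_payoff hz hconj
    have hw1 : w = 1 := mul_eq_left.mp hzw
    rw [hw] at hw1
    exact hzp hw1
  -- the center is contained in the commutator subgroup
  have hZC : Subgroup.center G ≤ commutator G := by
    intro z hz
    by_contra hzC
    have hzp : z ^ p = 1 := hZexp z hz
    by_cases hcyc : ∀ q : G ⧸ commutator G, q ∈ Subgroup.zpowers (z : G ⧸ commutator G)
    · haveI : IsCyclic (G ⧸ commutator G) := ⟨⟨(z : G ⧸ commutator G), hcyc⟩⟩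
      obtain ⟨x, y, hxy⟩ := hna
      refine hxy (commutative_of_cyclic_center_quotient
        (QuotientGroup.mk' (commutator G)) (fun g hg => hCZ ?_) x y)
      rwa [QuotientGroup.ker_mk'] at hg
    · push_neg at hcyc
      obtain ⟨u, hu⟩ := hcyc
      obtain ⟨u₀, rfl⟩ := QuotientGroup.mk_surjective u
      set Z1 := Subgroup.zpowers (z : G ⧸ commutator G) with hZ1
      haveI : Z1.Normal := Z1.normal_of_comm
      have hQ2exp : ∀ q : (G ⧸ commutator G) ⧸ Z1, q ^ p = 1 := by
        intro q
        induction q using QuotientGroup.induction_on with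
        | H r =>
          rw [← QuotientGroup.mk_pow, hQp r, QuotientGroup.mk_one]
      have hAexp2 : ∀ x : Additive ((G ⧸ commutator G) ⧸ Z1), p • x = 0 := by
        intro x
        show p • Additive.ofMul (Additive.toMul x) = 0
        rw [← ofMul_pow, hQ2exp]
        rfl
      have hu1 : (QuotientGroup.mk (QuotientGroup.mk u₀ : G ⧸ commutator G) :
          (G ⧸ commutator G) ⧸ Z1) ≠ 1 := by
        rw [Ne, QuotientGroup.eq_one_iff]
        exact hu
      have hordu : orderOf (QuotientGroup.mk (QuotientGroup.mk u₀ : G ⧸ commutator G) :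
          (G ⧸ commutator G) ⧸ Z1) = p := by
        rcases hp.eq_one_or_self_of_dvd _ (orderOf_dvd_of_pow_eq_one (hQ2exp _)) with h | h
        · exact absurd (orderOf_eq_one_iff.mp h) hu1
        · exact h
      obtain ⟨χ, hχu⟩ := exists_char hp.pos hAexp2
        (Additive.ofMul (QuotientGroup.mk (QuotientGroup.mk u₀ : G ⧸ commutator G) :
          (G ⧸ commutator G) ⧸ Z1))
        (by rw [addOrderOf_ofMul_eq_orderOf]; exact hordu)
      set n : G → ℕ := fun x =>
        (χ (Additive.ofMul (QuotientGroup.mk (QuotientGroup.mk x : G ⧸ commutator G) :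
          (G ⧸ commutator G) ⧸ Z1))).val with hn
      set f : G → G := fun x => z ^ n x with hf
      have hmul : ∀ x y : G, f (x * y) = f x * f y := by
        intro x y
        show z ^ n (x * y) = z ^ n x * z ^ n y
        have h2 : n (x * y) = (n x + n y) % p := by
          rw [hn]
          dsimp only
          rw [show (QuotientGroup.mk (QuotientGroup.mk (x * y) : G ⧸ commutator G) :
              (G ⧸ commutator G) ⧸ Z1)
              = QuotientGroup.mk (QuotientGroup.mk x : G ⧸ commutator G)
                * QuotientGroup.mk (QuotientGroup.mk y : G ⧸ commutator G) from rfl]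
          rw [ofMul_mul, map_add, ZMod.val_add]
        rw [h2, pow_mod_helper hzp, pow_add]
      have hcent : ∀ x y : G, f x * y = y * f x := fun x y =>
        (Subgroup.mem_center_iff.mp (Subgroup.pow_mem _ hz (n x)) y).symm
      have hinj : ∀ x : G, x * f x = 1 → x = 1 := by
        intro x hx
        have hxeq : x = (z ^ n x)⁻¹ := eq_inv_of_mul_eq_one_left hx
        have hxZ1 : (QuotientGroup.mk x : G ⧸ commutator G) ∈ Z1 := by
          rw [hxeq]
          rw [show (QuotientGroup.mk ((z ^ n x)⁻¹) : G ⧸ commutator G)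
              = ((z : G ⧸ commutator G) ^ n x)⁻¹ from rfl]
          exact Z1.inv_mem (Z1.pow_mem (Subgroup.mem_zpowers _) _)
        have hx0 : (QuotientGroup.mk (QuotientGroup.mk x : G ⧸ commutator G) :
            (G ⧸ commutator G) ⧸ Z1) = 1 := (QuotientGroup.eq_one_iff _).mpr hxZ1
        have hnx : n x = 0 := by
          rw [hn]
          dsimp only
          rw [hx0]
          simp
        rw [hxeq, hnx, pow_zero, inv_one]
      obtain ⟨φ, hφ⟩ := mk_aut f hmul hcent hinj
      have hconj := hclass φ u₀
      rw [hφ] at hconj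
      have hfu : f u₀ = z := by
        show z ^ n u₀ = z
        have hnu : n u₀ = 1 := by
          rw [hn]
          dsimp only
          rw [hχu, ZMod.val_one]
        rw [hnu, pow_one]
      rw [hfu] at hconj
      exact hzC (conj_payoff hconj)
  have hZeqC : Subgroup.center G = commutator G := le_antisymm hZC hCZ
  -- commutators with central factors
  have hcc : ∀ m c x : G, c ∈ Subgroup.center G → ⁅m * c, x⁆ = ⁅m, x⁆ := by
    intro m c x hc
    have h := Subgroup.mem_center_iff.mp hc x
    calc ⁅m * c, x⁆ = m * (c * x * c⁻¹) * m⁻¹ * x⁻¹ := by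
          rw [commutatorElement_def]; group
      _ = ⁅m, x⁆ := by rw [← h, commutatorElement_def]; group
  have hcc' : ∀ x m c : G, c ∈ Subgroup.center G → ⁅x, m * c⁆ = ⁅x, m⁆ := by
    intro x m c hc
    have h := Subgroup.mem_center_iff.mp hc x⁻¹
    calc ⁅x, m * c⁆ = x * m * (c * x⁻¹ * c⁻¹) * m⁻¹ := by
          rw [commutatorElement_def]; group
      _ = ⁅x, m⁆ := by rw [← h, commutatorElement_def]; group
  -- every maximal subgroup contains the commutator subgroup
  have hCM : ∀ M : Subgroup G, IsCoatom M → commutator G ≤ M := by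
    intro M hM
    by_cases hle : commutator G ≤ M
    · exact hle
    · have htop : M ⊔ commutator G = ⊤ := hM.2 _ (left_lt_sup.mpr hle)
      rw [commutator_def, Subgroup.commutator_le]
      intro g _ h _
      have hgm : g ∈ (M : Set G) * (commutator G : Set G) := by
        rw [← Subgroup.mul_normal M (commutator G), htop]
        exact Subgroup.mem_top g
      have hhm : h ∈ (M : Set G) * (commutator G : Set G) := by
        rw [← Subgroup.mul_normal M (commutator G), htop]
        exact Subgroup.mem_top h
      obtain ⟨m₁, hm₁, c₁, hc₁, hg⟩ := hgm
      obtain ⟨m₂, hm₂, c₂, hc₂, hh⟩ := hhm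
      have : ⁅g, h⁆ = ⁅m₁, m₂⁆ := by
        rw [← hg, ← hh, hcc m₁ c₁ _ (hCZ hc₁), hcc' _ m₂ c₂ (hCZ hc₂)]
      rw [this, commutatorElement_def]
      exact M.mul_mem (M.mul_mem (M.mul_mem hm₁ hm₂) (M.inv_mem hm₁)) (M.inv_mem hm₂)
  have hCF : commutator G ≤ frattini G := by
    simp only [frattini, Order.radical]
    exact le_iInf₂ fun M hM => hCM M hM
  -- the quotient by the center is commutative
  letI instVC : CommGroup (G ⧸ Subgroup.center G) :=
    { (inferInstance : Group (G ⧸ Subgroup.center G)) with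
      mul_comm := by
        intro q r
        induction q using QuotientGroup.induction_on with
        | H x =>
        induction r using QuotientGroup.induction_on with
        | H y =>
        rw [← QuotientGroup.mk_mul, ← QuotientGroup.mk_mul, QuotientGroup.eq]
        have hxy : (x * y)⁻¹ * (y * x) = ⁅y⁻¹, x⁻¹⁆ := by
          rw [commutatorElement_def]; group
        rw [hxy]
        apply hCZ
        rw [commutator_def]
        exact Subgroup.commutator_mem_commutator (Subgroup.mem_top _) (Subgroup.mem_top _) }
  -- the Frattini subgroup is contained in the center
  have hFZ : frattini G ≤ Subgroup.center G := by
    intro x hx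
    by_contra hxZ
    have hx1 : (QuotientGroup.mk x : G ⧸ Subgroup.center G) ≠ 1 := by
      rw [Ne, QuotientGroup.eq_one_iff]
      exact hxZ
    have hordx : orderOf (QuotientGroup.mk x : G ⧸ Subgroup.center G) = p := by
      rcases hp.eq_one_or_self_of_dvd _ (orderOf_dvd_of_pow_eq_one (hVexp _)) with h | h
      · exact absurd (orderOf_eq_one_iff.mp h) hx1
      · exact h
    have hAexpV : ∀ v : Additive (G ⧸ Subgroup.center G), p • v = 0 := by
      intro v
      show p • Additive.ofMul (Additive.toMul v) = 0
      rw [← ofMul_pow, hVexp]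
      rfl
    obtain ⟨χ, hχx⟩ := exists_char hp.pos hAexpV
      (Additive.ofMul (QuotientGroup.mk x : G ⧸ Subgroup.center G))
      (by rw [addOrderOf_ofMul_eq_orderOf]; exact hordx)
    set Ψ : G →* Multiplicative (ZMod p) :=
      { toFun := fun g => Multiplicative.ofAdd
          (χ (Additive.ofMul (QuotientGroup.mk g : G ⧸ Subgroup.center G)))
        map_one' := by
          rw [show (QuotientGroup.mk (1 : G) : G ⧸ Subgroup.center G) = 1 from rfl,
            ofMul_one, map_zero]
          rfl
        map_mul' := by
          intro g h
          rw [show (QuotientGroup.mk (g * h) : G ⧸ Subgroup.center G)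
              = QuotientGroup.mk g * QuotientGroup.mk h from rfl]
          rw [ofMul_mul, map_add]
          rfl
          } with hΨ
    have hΨx : Ψ x = Multiplicative.ofAdd (1 : ZMod p) := by
      show Multiplicative.ofAdd
        (χ (Additive.ofMul (QuotientGroup.mk x : G ⧸ Subgroup.center G))) = _
      rw [hχx]
    have hsurj : Function.Surjective Ψ := by
      intro y
      refine ⟨x ^ (Multiplicative.toAdd y).val, ?_⟩
      show Multiplicative.ofAdd
        (χ (Additive.ofMul (QuotientGroup.mk (x ^ (Multiplicative.toAdd y).val) :
          G ⧸ Subgroup.center G))) = y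
      rw [show (QuotientGroup.mk (x ^ (Multiplicative.toAdd y).val) : G ⧸ Subgroup.center G)
          = (QuotientGroup.mk x : G ⧸ Subgroup.center G) ^ (Multiplicative.toAdd y).val from rfl]
      rw [ofMul_pow, map_nsmul, hχx, nsmul_eq_mul, mul_one, ZMod.natCast_zmod_val]
      rfl
    have hind : Ψ.ker.index = p := by
      rw [Subgroup.index_ker]
      rw [MonoidHom.range_eq_top.mpr hsurj]
      rw [Subgroup.card_top]
      rw [Nat.card_congr Multiplicative.ofAdd.symm]
      exact Nat.card_zmod p
    have hcoatom := coatom_of_index_prime hp hind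
    have hxker : x ∈ Ψ.ker := frattini_le_coatom hcoatom hx
    rw [MonoidHom.mem_ker, hΨx] at hxker
    have : (1 : ZMod p) = 0 := by
      have := congrArg Multiplicative.toAdd hxker
      simpa using this
    exact one_ne_zero this
  refine ⟨hVexp, hCZ, hZeqC, ?_, fun _ => ⟨?_, ?_⟩⟩
  · rw [hZeqC]; exact hCF
  · exact le_antisymm (hZeqC ▸ hCF) hFZ
  · exact le_antisymm hCF (hFZ.trans hZC)
end
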